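/- arXiv:1806.03428 — 5 statements merged into one kernel-verified Lean document; each statement's English description precedes it below -/
import Mathlib

section
/- Let θ ∈ [0,1], let 1 ≤ p, q, r < ∞ and α, β, γ > 0 satisfy 1/p = θ/q + (1−θ)/r and α = θβ + (1−θ)γ. Then B^{q,β}(X) ∩ B^{r,γ}(X) ⊆ B^{p,α}(X), and every f ∈ B^{q,β}(X) ∩ B^{r,γ}(X) satisfies ‖f‖_{p,α} ≤ ‖f‖_{q,β}^{θ} · ‖f‖_{r,γ}^{1−θ}. -/
open MeasureTheory ENNReal Metric Filter

noncomputable section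

namespace BesovDirichlet

variable {X : Type*} [MeasurableSpace X]

/-- A heat kernel on a measure space: jointly measurable, nonnegative, symmetric,
satisfying the semigroup property and conservative. -/
structure IsHeatKernel (μ : Measure X) (K : ℝ → X → X → ℝ) : Prop where
  measurable : ∀ t : ℝ, Measurable fun xy : X × X => K t xy.1 xy.2
  nonneg : ∀ (t : ℝ) (x y : X), 0 ≤ K t x y
  symm : ∀ (t : ℝ) (x y : X), K t x y = K t y x
  semigroup : ∀ s t : ℝ, 0 < s → 0 < t →
    ∀ᵐ xy ∂(μ.prod μ), (∫ z, K t xy.1 z * K s z xy.2 ∂μ) = K (t + s) xy.1 xy.2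
  conservative : ∀ t : ℝ, 0 < t → ∀ᵐ x ∂μ, (∫ y, K t x y ∂μ) = 1

/-- The heat semigroup `P_t f (x) = ∫ p_t(x,y) f(y) dμ(y)`. -/
def heatOp (μ : Measure X) (K : ℝ → X → X → ℝ) (t : ℝ) (f : X → ℝ) (x : X) : ℝ :=
  ∫ y, K t x y * f y ∂μ

/-- The double integral `∫∫ |f(x) − f(y)|^p p_t(x,y) dμ(x) dμ(y)` as an extended real. -/
def besovEnergy (μ : Measure X) (K : ℝ → X → X → ℝ) (p t : ℝ) (f : X → ℝ) : ℝ≥0∞ :=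
  ∫⁻ x, (∫⁻ y, ENNReal.ofReal (|f x - f y| ^ p) * ENNReal.ofReal (K t x y) ∂μ) ∂μ

/-- The heat-semigroup Besov seminorm `‖f‖_{p,α}`. -/
def besovSeminorm (μ : Measure X) (K : ℝ → X → X → ℝ) (p α : ℝ) (f : X → ℝ) : ℝ≥0∞ :=
  ⨆ (t : ℝ) (_ : 0 < t), ENNReal.ofReal (t ^ (-α)) * besovEnergy μ K p t f ^ (1 / p)

/-- Membership in the Besov space `B^{p,α}(X)`. -/
def MemBesov (μ : Measure X) (K : ℝ → X → X → ℝ) (p α : ℝ) (f : X → ℝ) : Prop :=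
  MemLp f (ENNReal.ofReal p) μ ∧ besovSeminorm μ K p α f ≠ ∞

/-- Lyapunov-type interpolation inequality for weighted lintegrals. -/
private lemma lyapunov {Y : Type*} [MeasurableSpace Y] (ν : Measure Y) {g w : Y → ℝ≥0∞}
    (hg : AEMeasurable g ν) (hw : AEMeasurable w ν)
    {θ p q r : ℝ} (hθ0 : 0 < θ) (hθ1 : θ < 1) (hp : 0 < p) (hq : 0 < q) (hr : 0 < r)
    (hexp : 1 / p = θ / q + (1 - θ) / r) :
    (∫⁻ z, g z ^ p * w z ∂ν) ^ (1 / p) ≤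
      ((∫⁻ z, g z ^ q * w z ∂ν) ^ (1 / q)) ^ θ *
        ((∫⁻ z, g z ^ r * w z ∂ν) ^ (1 / r)) ^ (1 - θ) := by
  have h1θ : 0 < 1 - θ := by linarith
  set a := θ * p / q with ha_def
  set b := (1 - θ) * p / r with hb_def
  have ha : 0 < a := by positivity
  have hb : 0 < b := by positivity
  have hab : a + b = 1 := by
    have h : a + b = p * (θ / q + (1 - θ) / r) := by rw [ha_def, hb_def]; ring
    rw [h, ← hexp, mul_one_div, div_self hp.ne']
  have hconj : Real.HolderConjugate (1 / a) (1 / b) :=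
    Real.holderConjugate_iff.mpr ⟨one_lt_one_div ha (by linarith), by
      rw [one_div, one_div, inv_inv, inv_inv]; exact hab⟩
  have hF : AEMeasurable (fun z => g z ^ (θ * p) * w z ^ a) ν :=
    (hg.pow_const _).mul (hw.pow_const _)
  have hG : AEMeasurable (fun z => g z ^ ((1 - θ) * p) * w z ^ b) ν :=
    (hg.pow_const _).mul (hw.pow_const _)
  have key := ENNReal.lintegral_mul_le_Lp_mul_Lq ν hconj hF hG
  have e1 : ∀ z, ((fun z => g z ^ (θ * p) * w z ^ a) * fun z => g z ^ ((1 - θ) * p) * w z ^ b) z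
      = g z ^ p * w z := by
    intro z
    simp only [Pi.mul_apply]
    rw [mul_mul_mul_comm, ← ENNReal.rpow_add_of_nonneg _ _ (by positivity) (by positivity),
      ← ENNReal.rpow_add_of_nonneg _ _ ha.le hb.le, hab, ENNReal.rpow_one]
    congr 1
    congr 1
    ring
  have e2 : ∀ z, (g z ^ (θ * p) * w z ^ a) ^ (1 / a) = g z ^ q * w z := by
    intro z
    rw [ENNReal.mul_rpow_of_nonneg _ _ (by positivity), ← ENNReal.rpow_mul, ← ENNReal.rpow_mul]
    have h1 : θ * p * (1 / a) = q := by rw [ha_def]; field_simp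
    have h2 : a * (1 / a) = 1 := mul_one_div_cancel ha.ne'
    rw [h1, h2, ENNReal.rpow_one]
  have e3 : ∀ z, (g z ^ ((1 - θ) * p) * w z ^ b) ^ (1 / b) = g z ^ r * w z := by
    intro z
    rw [ENNReal.mul_rpow_of_nonneg _ _ (by positivity), ← ENNReal.rpow_mul, ← ENNReal.rpow_mul]
    have h1 : (1 - θ) * p * (1 / b) = r := by rw [hb_def]; field_simp
    have h2 : b * (1 / b) = 1 := mul_one_div_cancel hb.ne'
    rw [h1, h2, ENNReal.rpow_one]
  rw [lintegral_congr e1, lintegral_congr e2, lintegral_congr e3, one_div_one_div,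
    one_div_one_div] at key
  calc (∫⁻ z, g z ^ p * w z ∂ν) ^ (1 / p)
      ≤ ((∫⁻ z, g z ^ q * w z ∂ν) ^ a * (∫⁻ z, g z ^ r * w z ∂ν) ^ b) ^ (1 / p) :=
        ENNReal.rpow_le_rpow key (by positivity)
    _ = ((∫⁻ z, g z ^ q * w z ∂ν) ^ (1 / q)) ^ θ *
        ((∫⁻ z, g z ^ r * w z ∂ν) ^ (1 / r)) ^ (1 - θ) := by
        rw [ENNReal.mul_rpow_of_nonneg _ _ (by positivity), ← ENNReal.rpow_mul,
          ← ENNReal.rpow_mul, ← ENNReal.rpow_mul, ← ENNReal.rpow_mul]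
        congr 1
        · congr 1
          rw [ha_def]; field_simp
        · congr 1
          rw [hb_def]; field_simp

/-- The Besov energy as a lintegral over the product measure. -/
private lemma energy_eq (μ : Measure X) [SigmaFinite μ]
    (K : ℝ → X → X → ℝ) (hK : ∀ t : ℝ, Measurable fun xy : X × X => K t xy.1 xy.2)
    (s t : ℝ) (hs : 0 < s) (f : X → ℝ) (hf : AEMeasurable f μ) :
    besovEnergy μ K s t f
      = ∫⁻ z : X × X, ENNReal.ofReal |f z.1 - f z.2| ^ s
          * ENNReal.ofReal (K t z.1 z.2) ∂(μ.prod μ) := by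
  have h1 : AEMeasurable (fun z : X × X => f z.1) (μ.prod μ) :=
    hf.comp_quasiMeasurePreserving Measure.quasiMeasurePreserving_fst
  have h2 : AEMeasurable (fun z : X × X => f z.2) (μ.prod μ) :=
    hf.comp_quasiMeasurePreserving Measure.quasiMeasurePreserving_snd
  have hm : AEMeasurable
      (Function.uncurry fun x y =>
        ENNReal.ofReal (|f x - f y| ^ s) * ENNReal.ofReal (K t x y)) (μ.prod μ) := by
    have : AEMeasurable (fun z : X × X => |f z.1 - f z.2| ^ s) (μ.prod μ) :=
      ((h1.sub h2).norm.congr (by simp [Real.norm_eq_abs])).pow_const s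
    exact (ENNReal.measurable_ofReal.comp_aemeasurable this).mul
      (ENNReal.measurable_ofReal.comp_aemeasurable (hK t).aemeasurable)
  rw [besovEnergy, MeasureTheory.lintegral_lintegral hm]
  refine lintegral_congr fun z => ?_
  rw [ENNReal.ofReal_rpow_of_nonneg (abs_nonneg _) hs.le]

/-- **Interpolation inequality for Besov spaces.** -/
theorem besov_interpolation
    {X : Type*} [MetricSpace X] [MeasurableSpace X] [BorelSpace X]
    (μ : Measure X) [SigmaFinite μ] (K : ℝ → X → X → ℝ) (hK : IsHeatKernel μ K)
    (θ p q r α β γ : ℝ) (hθ0 : 0 ≤ θ) (hθ1 : θ ≤ 1)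
    (hp : 1 ≤ p) (hq : 1 ≤ q) (hr : 1 ≤ r)
    (hα : 0 < α) (hβ : 0 < β) (hγ : 0 < γ)
    (hexp : 1 / p = θ / q + (1 - θ) / r) (hord : α = θ * β + (1 - θ) * γ)
    (f : X → ℝ) (hfq : MemBesov μ K q β f) (hfr : MemBesov μ K r γ f) :
    MemBesov μ K p α f ∧
      besovSeminorm μ K p α f ≤
        besovSeminorm μ K q β f ^ θ * besovSeminorm μ K r γ f ^ (1 - θ) := by
  have hp0 : 0 < p := lt_of_lt_of_le zero_lt_one hp
  have hq0 : 0 < q := lt_of_lt_of_le zero_lt_one hq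
  have hr0 : 0 < r := lt_of_lt_of_le zero_lt_one hr
  rcases eq_or_lt_of_le hθ0 with h0 | h0
  · -- θ = 0
    have hθ : θ = 0 := h0.symm
    subst hθ
    simp only [zero_div, zero_add, sub_zero, one_mul, zero_mul] at hexp hord
    rw [one_div, one_div, inv_inj] at hexp
    subst hexp
    subst hord
    refine ⟨hfr, ?_⟩
    simp
  rcases eq_or_lt_of_le hθ1 with h1 | h1
  · -- θ = 1
    subst h1
    simp only [sub_self, zero_div, add_zero, one_mul, zero_mul] at hexp hord
    rw [one_div, one_div, inv_inj] at hexp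
    subst hexp
    subst hord
    refine ⟨hfq, ?_⟩
    simp
  -- main case 0 < θ < 1
  have h1θ : 0 < 1 - θ := by linarith
  have hfm : AEStronglyMeasurable f μ := hfq.1.1
  have hfa : AEMeasurable f μ := hfm.aemeasurable
  have hle : ∀ (s' α' : ℝ) (t : ℝ), 0 < t →
      ENNReal.ofReal (t ^ (-α')) * besovEnergy μ K s' t f ^ (1 / s')
        ≤ besovSeminorm μ K s' α' f := fun s' α' t ht =>
    le_iSup₂ (f := fun t (_ : 0 < t) =>
      ENNReal.ofReal (t ^ (-α')) * besovEnergy μ K s' t f ^ (1 / s')) t ht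
  have hsem : besovSeminorm μ K p α f ≤
      besovSeminorm μ K q β f ^ θ * besovSeminorm μ K r γ f ^ (1 - θ) := by
    refine iSup₂_le fun t ht => ?_
    have hg : AEMeasurable (fun z : X × X => ENNReal.ofReal |f z.1 - f z.2|) (μ.prod μ) := by
      have h1 : AEMeasurable (fun z : X × X => f z.1) (μ.prod μ) :=
        hfa.comp_quasiMeasurePreserving Measure.quasiMeasurePreserving_fst
      have h2 : AEMeasurable (fun z : X × X => f z.2) (μ.prod μ) :=
        hfa.comp_quasiMeasurePreserving Measure.quasiMeasurePreserving_snd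
      exact ENNReal.measurable_ofReal.comp_aemeasurable
        ((h1.sub h2).norm.congr (by simp [Real.norm_eq_abs]))
    have hw : AEMeasurable (fun z : X × X => ENNReal.ofReal (K t z.1 z.2)) (μ.prod μ) :=
      (ENNReal.measurable_ofReal.comp (hK.measurable t)).aemeasurable
    have hE : besovEnergy μ K p t f ^ (1 / p) ≤
        (besovEnergy μ K q t f ^ (1 / q)) ^ θ * (besovEnergy μ K r t f ^ (1 / r)) ^ (1 - θ) := by
      rw [energy_eq μ K hK.measurable p t hp0 f hfa, energy_eq μ K hK.measurable q t hq0 f hfa,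
        energy_eq μ K hK.measurable r t hr0 f hfa]
      exact lyapunov (μ.prod μ) hg hw h0 h1 hp0 hq0 hr0 hexp
    have hco : ENNReal.ofReal (t ^ (-α)) =
        ENNReal.ofReal (t ^ (-β)) ^ θ * ENNReal.ofReal (t ^ (-γ)) ^ (1 - θ) := by
      rw [ENNReal.ofReal_rpow_of_pos (Real.rpow_pos_of_pos ht _),
        ENNReal.ofReal_rpow_of_pos (Real.rpow_pos_of_pos ht _),
        ← ENNReal.ofReal_mul (by positivity)]
      congr 1
      rw [← Real.rpow_mul ht.le, ← Real.rpow_mul ht.le, ← Real.rpow_add ht]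
      congr 1
      rw [hord]; ring
    calc ENNReal.ofReal (t ^ (-α)) * besovEnergy μ K p t f ^ (1 / p)
        ≤ ENNReal.ofReal (t ^ (-β)) ^ θ * ENNReal.ofReal (t ^ (-γ)) ^ (1 - θ)
            * ((besovEnergy μ K q t f ^ (1 / q)) ^ θ *
                (besovEnergy μ K r t f ^ (1 / r)) ^ (1 - θ)) := by
          rw [hco]; exact mul_le_mul_right hE _
      _ = (ENNReal.ofReal (t ^ (-β)) * besovEnergy μ K q t f ^ (1 / q)) ^ θ *
          (ENNReal.ofReal (t ^ (-γ)) * besovEnergy μ K r t f ^ (1 / r)) ^ (1 - θ) := by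
          rw [ENNReal.mul_rpow_of_nonneg _ _ hθ0, ENNReal.mul_rpow_of_nonneg _ _ h1θ.le]
          ring
      _ ≤ besovSeminorm μ K q β f ^ θ * besovSeminorm μ K r γ f ^ (1 - θ) :=
          mul_le_mul' (ENNReal.rpow_le_rpow (hle q β t ht) hθ0)
            (ENNReal.rpow_le_rpow (hle r γ t ht) h1θ.le)
  have hfin : besovSeminorm μ K p α f ≠ ∞ :=
    ne_top_of_le_ne_top (ENNReal.mul_ne_top
      (ENNReal.rpow_ne_top_of_nonneg hθ0 hfq.2)
      (ENNReal.rpow_ne_top_of_nonneg h1θ.le hfr.2)) hsem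
  have hmem : MemLp f (ENNReal.ofReal p) μ := by
    refine ⟨hfm, ?_⟩
    rw [eLpNorm_eq_lintegral_rpow_enorm_toReal (ENNReal.ofReal_pos.mpr hp0).ne'
      ENNReal.ofReal_ne_top, ENNReal.toReal_ofReal hp0.le]
    have hly := lyapunov (w := fun _ => (1 : ℝ≥0∞)) μ hfm.enorm aemeasurable_const
      h0 h1 hp0 hq0 hr0 hexp
    simp only [mul_one] at hly
    have hq' := hfq.1.2
    have hr' := hfr.1.2
    rw [eLpNorm_eq_lintegral_rpow_enorm_toReal (ENNReal.ofReal_pos.mpr hq0).ne'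
      ENNReal.ofReal_ne_top, ENNReal.toReal_ofReal hq0.le] at hq'
    rw [eLpNorm_eq_lintegral_rpow_enorm_toReal (ENNReal.ofReal_pos.mpr hr0).ne'
      ENNReal.ofReal_ne_top, ENNReal.toReal_ofReal hr0.le] at hr'
    calc (∫⁻ x, (‖f x‖₊ : ℝ≥0∞) ^ p ∂μ) ^ (1 / p)
        ≤ ((∫⁻ x, (‖f x‖₊ : ℝ≥0∞) ^ q ∂μ) ^ (1 / q)) ^ θ *
            ((∫⁻ x, (‖f x‖₊ : ℝ≥0∞) ^ r ∂μ) ^ (1 / r)) ^ (1 - θ) := hly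
      _ < ∞ := (ENNReal.mul_ne_top
            (ENNReal.rpow_ne_top_of_nonneg hθ0 hq'.ne)
            (ENNReal.rpow_ne_top_of_nonneg h1θ.le hr'.ne)).lt_top
  exact ⟨⟨hmem, hfin⟩, hsem⟩

end BesovDirichlet
end
end

section
/- Let 1 < p ≤ 2. There exists a constant C_p > 0, depending only on p, such that for every nonnegative f ∈ L^p(X,μ) and every t > 0: ( ∫_X ∫_X p_t(x,y) |f(x) − f(y)|^p dμ(x) dμ(y) )^{1/p} ≤ C_p · ‖f‖_{L^p(X,μ)}^{1/2} · ‖P_t f − f‖_{L^p(X,μ)}^{1/2}. -/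
open MeasureTheory ENNReal Metric Filter

noncomputable section

namespace BesovDirichlet

variable {X : Type*} [MeasurableSpace X]

lemma tangent_bound {p a b : ℝ} (hp1 : 1 < p) (hp2 : p ≤ 2) (hb : 0 ≤ b) (hba : b ≤ a) :
    (p - 1) * a ^ (p - 2) * (a - b) ≤ a ^ (p - 1) - b ^ (p - 1) := by
  have ha : 0 ≤ a := hb.trans hba
  rcases eq_or_lt_of_le ha with ha0 | ha0
  · have hb0 : b = 0 := le_antisymm (hba.trans_eq ha0.symm) hb
    rw [← ha0, hb0]
    simp
  · -- a > 0
    have hgm := Real.geom_mean_le_arith_mean2_weighted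
      (by linarith : (0:ℝ) ≤ p - 1) (by linarith : (0:ℝ) ≤ 2 - p)
      (div_nonneg hb ha) (zero_le_one) (by ring)
    rw [Real.one_rpow, mul_one] at hgm
    rw [Real.div_rpow hb ha] at hgm
    have hapow : (0:ℝ) < a ^ (p - 1) := Real.rpow_pos_of_pos ha0 _
    have h1 : b ^ (p-1) ≤ ((p-1) * (b/a) + (2-p)) * a ^ (p-1) := by
      rw [div_le_iff₀ hapow] at hgm; linarith
    have h2 : a ^ (p - 1) = a ^ (p - 2) * a := by
      rw [show p - 1 = (p-2) + 1 by ring, Real.rpow_add_one (ne_of_gt ha0)]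
    have h4 : ((p-1)*(b/a) + (2-p)) * a^(p-1) = (p-1)*(a^(p-2))*b + (2-p)*(a^(p-2)*a) := by
      rw [h2]; field_simp
    rw [h2]
    nlinarith [h1, h4]

/-- Key pointwise inequality (assuming `b ≤ a`). -/
lemma key_pointwise_aux {p a b : ℝ} (hp1 : 1 < p) (hp2 : p ≤ 2) (hb : 0 ≤ b) (hba : b ≤ a) :
    |a - b| ^ p ≤ (p-1)⁻¹ ^ (p/2) *
      ((a - b) * (a ^ (p-1) - b ^ (p-1))) ^ (p/2) * ((a + b) ^ p) ^ ((2-p)/2) := by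
  have ha : 0 ≤ a := hb.trans hba
  have hab : 0 ≤ a - b := sub_nonneg.2 hba
  have hG : 0 ≤ (a - b) * (a ^ (p-1) - b ^ (p-1)) :=
    mul_nonneg hab (sub_nonneg.2 (Real.rpow_le_rpow hb hba (by linarith)))
  rcases eq_or_lt_of_le ha with ha0 | ha0
  · have hb0 : b = 0 := le_antisymm (hba.trans_eq ha0.symm) hb
    have e1 : |a - b| ^ p = 0 := by
      rw [hb0, ← ha0, sub_zero, abs_zero, Real.zero_rpow (by linarith : p ≠ 0)]
    rw [e1]
    refine mul_nonneg (mul_nonneg (Real.rpow_nonneg (inv_nonneg.2 (by linarith : (0:ℝ) ≤ p - 1)) _)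
      (Real.rpow_nonneg hG _)) (Real.rpow_nonneg (Real.rpow_nonneg (by linarith) _) _)
  · -- a > 0, so a + b > 0
    have hab2 : (0:ℝ) < a + b := by linarith
    have hkey : (a-b)^(2:ℝ) * (a+b)^(p-2) ≤ (p-1)⁻¹ * ((a - b) * (a ^ (p-1) - b ^ (p-1))) := by
      have hmono : (a+b) ^ (p-2) ≤ a ^ (p-2) :=
        Real.rpow_le_rpow_of_nonpos ha0 (by linarith) (by linarith)
      have htan := tangent_bound hp1 hp2 hb hba
      have hsq : (a-b)^(2:ℝ) = (a-b)*(a-b) := by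
        rw [show (2:ℝ) = ((2:ℕ):ℝ) by norm_num, Real.rpow_natCast]; ring
      rw [hsq]
      calc (a-b)*(a-b) * (a+b)^(p-2) ≤ (a-b)*(a-b) * a^(p-2) := by
            apply mul_le_mul_of_nonneg_left hmono (by positivity)
        _ ≤ (p-1)⁻¹ * ((a - b) * (a ^ (p-1) - b ^ (p-1))) := by
            rw [inv_mul_eq_div, le_div_iff₀ (by linarith : (0:ℝ) < p - 1)]
            nlinarith [mul_le_mul_of_nonneg_left htan hab]
    have hid : |a - b| ^ p = ((a-b)^(2:ℝ) * (a+b)^(p-2)) ^ (p/2) * ((a+b)^p) ^ ((2-p)/2) := by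
      rw [abs_of_nonneg hab]
      rw [Real.mul_rpow (Real.rpow_nonneg hab _) (Real.rpow_nonneg hab2.le _)]
      rw [← Real.rpow_mul hab, ← Real.rpow_mul hab2.le, ← Real.rpow_mul hab2.le]
      rw [show (2:ℝ) * (p/2) = p by ring]
      rw [mul_assoc, ← Real.rpow_add hab2]
      rw [show (p-2) * (p/2) + p * ((2-p)/2) = 0 by ring, Real.rpow_zero, mul_one]
    rw [hid]
    have := Real.rpow_le_rpow (mul_nonneg (Real.rpow_nonneg hab _)
      (Real.rpow_nonneg hab2.le _)) hkey (by positivity : (0:ℝ) ≤ p/2)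
    calc ((a-b)^(2:ℝ) * (a+b)^(p-2)) ^ (p/2) * ((a+b)^p) ^ ((2-p)/2)
        ≤ ((p-1)⁻¹ * ((a - b) * (a ^ (p-1) - b ^ (p-1)))) ^ (p/2) * ((a+b)^p) ^ ((2-p)/2) := by
          apply mul_le_mul_of_nonneg_right this (Real.rpow_nonneg (Real.rpow_nonneg hab2.le _) _)
      _ = (p-1)⁻¹ ^ (p/2) * ((a - b) * (a ^ (p-1) - b ^ (p-1))) ^ (p/2) * ((a+b)^p) ^ ((2-p)/2) := by
          rw [Real.mul_rpow (inv_nonneg.2 (by linarith : (0:ℝ) ≤ p - 1)) hG]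

lemma key_pointwise {p a b : ℝ} (hp1 : 1 < p) (hp2 : p ≤ 2) (ha : 0 ≤ a) (hb : 0 ≤ b) :
    |a - b| ^ p ≤ (p-1)⁻¹ ^ (p/2) *
      ((a - b) * (a ^ (p-1) - b ^ (p-1))) ^ (p/2) * ((a + b) ^ p) ^ ((2-p)/2) := by
  rcases le_total b a with h | h
  · exact key_pointwise_aux hp1 hp2 hb h
  · have := key_pointwise_aux hp1 hp2 ha h
    rw [abs_sub_comm, add_comm b a] at this
    calc |a - b| ^ p ≤ (p-1)⁻¹ ^ (p/2) *
          ((b - a) * (b ^ (p-1) - a ^ (p-1))) ^ (p/2) * ((a + b) ^ p) ^ ((2-p)/2) := this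
      _ = _ := by rw [show (b-a) * (b^(p-1) - a^(p-1)) = (a-b)*(a^(p-1)-b^(p-1)) by ring]

lemma cross_identity {p a b : ℝ} (hp1 : 1 < p) (ha : 0 ≤ a) (hb : 0 ≤ b) :
    (a - b) * (a ^ (p-1) - b ^ (p-1)) + (a * b ^ (p-1) + a ^ (p-1) * b) = a ^ p + b ^ p := by
  have h1 : a ^ p = a * a ^ (p-1) := by
    nth_rewrite 1 [show p = 1 + (p-1) by ring]
    rw [Real.rpow_add' ha (ne_of_gt (by linarith : (0:ℝ) < 1 + (p-1))), Real.rpow_one]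
  have h2 : b ^ p = b * b ^ (p-1) := by
    nth_rewrite 1 [show p = 1 + (p-1) by ring]
    rw [Real.rpow_add' hb (ne_of_gt (by linarith : (0:ℝ) < 1 + (p-1))), Real.rpow_one]
  nlinarith [h1, h2]

lemma two_bound {p a b : ℝ} (hp0 : 0 < p) (ha : 0 ≤ a) (hb : 0 ≤ b) :
    (a + b) ^ p ≤ 2 ^ p * (a ^ p + b ^ p) := by
  have h1 : a + b ≤ 2 * max a b := by
    rcases le_total a b with h | h
    · simp [max_eq_right h]; linarith
    · simp [max_eq_left h]; linarith
  have h2 : (a+b)^p ≤ (2 * max a b)^p :=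
    Real.rpow_le_rpow (by linarith) h1 hp0.le
  have h3 : (2 * max a b : ℝ)^p = 2^p * (max a b)^p :=
    Real.mul_rpow (by norm_num) (le_max_of_le_left ha)
  have h4 : (max a b)^p ≤ a^p + b^p := by
    rcases le_total a b with h | h
    · rw [max_eq_right h]; nlinarith [Real.rpow_nonneg ha p]
    · rw [max_eq_left h]; nlinarith [Real.rpow_nonneg hb p]
  calc (a+b)^p ≤ 2^p * (max a b)^p := h2.trans_eq h3
    _ ≤ 2^p * (a^p + b^p) := by
        apply mul_le_mul_of_nonneg_left h4 (by positivity)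

lemma key_ennreal {p a b k : ℝ} (hp1 : 1 < p) (hp2 : p ≤ 2) (ha : 0 ≤ a) (hb : 0 ≤ b)
    (hk : 0 ≤ k) :
    ENNReal.ofReal (|a - b| ^ p) * ENNReal.ofReal k ≤
      ENNReal.ofReal ((p-1)⁻¹ ^ (p/2)) *
        ((ENNReal.ofReal ((a - b) * (a ^ (p-1) - b ^ (p-1))) * ENNReal.ofReal k) ^ (p/2) *
         (ENNReal.ofReal ((a + b) ^ p) * ENNReal.ofReal k) ^ ((2-p)/2)) := by
  have hp0 : (0:ℝ) < p := by linarith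
  have hs : (0:ℝ) ≤ p/2 := by positivity
  have hr : (0:ℝ) ≤ (2-p)/2 := by linarith
  have hG : 0 ≤ (a - b) * (a ^ (p-1) - b ^ (p-1)) := by
    rcases le_total b a with h | h
    · exact mul_nonneg (by linarith) (sub_nonneg.2 (Real.rpow_le_rpow hb h (by linarith)))
    · have h2 := mul_nonneg (sub_nonneg.2 h)
        (sub_nonneg.2 (Real.rpow_le_rpow ha h (by linarith : (0:ℝ) ≤ p - 1)))
      nlinarith [h2]
  have hH : (0:ℝ) ≤ (a + b) ^ p := Real.rpow_nonneg (by linarith) _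
  rw [ENNReal.mul_rpow_of_nonneg _ _ hs, ENNReal.mul_rpow_of_nonneg _ _ hr]
  have hκ : ENNReal.ofReal k ^ (p/2) * ENNReal.ofReal k ^ ((2-p)/2) = ENNReal.ofReal k := by
    rw [← ENNReal.rpow_add_of_nonneg _ _ hs hr, show p/2 + (2-p)/2 = 1 by ring,
      ENNReal.rpow_one]
  calc ENNReal.ofReal (|a - b| ^ p) * ENNReal.ofReal k
      ≤ (ENNReal.ofReal ((p-1)⁻¹ ^ (p/2)) *
          (ENNReal.ofReal ((a - b) * (a ^ (p-1) - b ^ (p-1))) ^ (p/2) *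
           ENNReal.ofReal ((a + b) ^ p) ^ ((2-p)/2))) * ENNReal.ofReal k := by
        refine mul_le_mul_left ?_ _
        rw [ENNReal.ofReal_rpow_of_nonneg hG hs, ENNReal.ofReal_rpow_of_nonneg hH hr,
          ← ENNReal.ofReal_mul (Real.rpow_nonneg hG _),
          ← ENNReal.ofReal_mul (Real.rpow_nonneg (inv_nonneg.2 (by linarith)) _)]
        exact ENNReal.ofReal_le_ofReal (by
            calc |a-b|^p ≤ _ := key_pointwise hp1 hp2 ha hb
              _ = _ := by ring)
      _ = _ := by
        rw [show (ENNReal.ofReal ((a - b) * (a ^ (p-1) - b ^ (p-1))) ^ (p/2) *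
              ENNReal.ofReal k ^ (p/2)) *
             (ENNReal.ofReal ((a + b) ^ p) ^ ((2-p)/2) * ENNReal.ofReal k ^ ((2-p)/2)) =
             (ENNReal.ofReal ((a - b) * (a ^ (p-1) - b ^ (p-1))) ^ (p/2) *
              ENNReal.ofReal ((a + b) ^ p) ^ ((2-p)/2)) *
             (ENNReal.ofReal k ^ (p/2) * ENNReal.ofReal k ^ ((2-p)/2)) from by ring, hκ]
        ring

lemma final_compute {p : ℝ} (hp1 : 1 < p) (hp2 : p ≤ 2) {N D A B E : ℝ≥0∞}
    (hNtop : N ≠ ∞)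
    (hE : E ≤ ENNReal.ofReal ((p-1)⁻¹ ^ (p/2)) * (A ^ (p/2) * B ^ ((2-p)/2)))
    (hA : A ≤ 2 * (N ^ ((p-1)/p) * D ^ (1/p)))
    (hB : B ≤ ENNReal.ofReal (2 ^ p) * (N + N)) :
    E ^ (1/p) ≤ ENNReal.ofReal (4 * (p-1)⁻¹ ^ ((1:ℝ)/2)) * (N ^ (1/p)) ^ ((1:ℝ)/2) *
      (D ^ (1/p)) ^ ((1:ℝ)/2) := by
  have hp0 : (0:ℝ) < p := by linarith
  have hip : (0:ℝ) < (p-1)⁻¹ := inv_pos.2 (by linarith)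
  have hEzero : A = 0 → E = 0 := by
    intro hA0
    rw [hA0, ENNReal.zero_rpow_of_pos (by positivity), zero_mul, mul_zero] at hE
    exact le_antisymm hE zero_le
  by_cases hN0 : N = 0
  · have hA0 : A = 0 := by
      rw [hN0, ENNReal.zero_rpow_of_pos (div_pos (by linarith) hp0), zero_mul, mul_zero] at hA
      exact le_antisymm hA zero_le
    rw [hEzero hA0, ENNReal.zero_rpow_of_pos (by positivity)]
    exact zero_le
  by_cases hD0 : D = 0
  · have hA0 : A = 0 := by
      rw [hD0, ENNReal.zero_rpow_of_pos (by positivity), mul_zero, mul_zero] at hA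
      exact le_antisymm hA zero_le
    rw [hEzero hA0, ENNReal.zero_rpow_of_pos (by positivity)]
    exact zero_le
  by_cases hDtop : D = ∞
  · rw [hDtop, ENNReal.top_rpow_of_pos (by positivity), ENNReal.top_rpow_of_pos (by norm_num),
      ENNReal.mul_top ?_]
    · exact le_top
    · refine mul_ne_zero (ne_of_gt (ENNReal.ofReal_pos.2 (by positivity))) ?_
      simp [ENNReal.rpow_eq_zero_iff, hN0, hNtop]
  -- main case
  set n := N.toReal with hn_def
  set d := D.toReal with hd_def
  have hn : 0 < n := ENNReal.toReal_pos hN0 hNtop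
  have hd : 0 < d := ENNReal.toReal_pos hD0 hDtop
  have hN : N = ENNReal.ofReal n := (ENNReal.ofReal_toReal hNtop).symm
  have hD : D = ENNReal.ofReal d := (ENNReal.ofReal_toReal hDtop).symm
  have h2e : (2:ℝ≥0∞) = ENNReal.ofReal 2 := (ENNReal.ofReal_ofNat 2).symm
  have step1 : E ^ (1/p) ≤ (ENNReal.ofReal ((p-1)⁻¹ ^ (p/2)) *
      ((2 * (N ^ ((p-1)/p) * D ^ (1/p))) ^ (p/2) *
       (ENNReal.ofReal (2 ^ p) * (N + N)) ^ ((2-p)/2))) ^ (1/p) := by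
    refine ENNReal.rpow_le_rpow ?_ (by positivity)
    refine hE.trans (mul_le_mul_right (mul_le_mul'
      (ENNReal.rpow_le_rpow hA (by positivity))
      (ENNReal.rpow_le_rpow hB (by linarith))) _)
  refine step1.trans ?_
  have hreal : (((p-1)⁻¹ ^ (p/2)) * ((2 * (n ^ ((p-1)/p) * d ^ (1/p))) ^ (p/2) *
      ((2 ^ p) * (n + n)) ^ ((2-p)/2))) ^ (1/p) ≤
      (4 * (p-1)⁻¹ ^ ((1:ℝ)/2)) * (n ^ (1/p)) ^ ((1:ℝ)/2) * (d ^ (1/p)) ^ ((1:ℝ)/2) := by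
    have hnd : (0:ℝ) < n ^ ((p-1)/p) * d ^ (1/p) := by positivity
    rw [show (2:ℝ)^p * (n+n) = (2:ℝ)^(p+1) * n from by
      rw [Real.rpow_add_one (by norm_num : (2:ℝ) ≠ 0)]; ring]
    rw [Real.mul_rpow (by positivity) (by positivity)]
    rw [Real.mul_rpow (by positivity) (by positivity)]
    rw [← Real.rpow_mul (by positivity : (0:ℝ) ≤ 2 * (n ^ ((p-1)/p) * d ^ (1/p)))]
    rw [← Real.rpow_mul (by positivity : (0:ℝ) ≤ (2:ℝ)^(p+1) * n)]
    rw [show (p/2)*(1/p) = (1:ℝ)/2 from by field_simp <;> ring]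
    rw [show ((2-p)/2)*(1/p) = (2-p)/(2*p) from by field_simp <;> ring]
    rw [Real.mul_rpow (by norm_num : (0:ℝ) ≤ 2) hnd.le]
    rw [Real.mul_rpow (by positivity) (by positivity)]
    rw [Real.mul_rpow (by positivity : (0:ℝ) ≤ (2:ℝ)^(p+1)) hn.le]
    rw [← Real.rpow_mul hn.le, ← Real.rpow_mul hd.le]
    rw [← Real.rpow_mul (by norm_num : (0:ℝ) ≤ (2:ℝ))]
    rw [← Real.rpow_mul hip.le]
    rw [← Real.rpow_mul hn.le]
    -- now everything is flat rpow
    rw [show (p/2)*(1/p) = (1:ℝ)/2 from by field_simp <;> ring]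
    have hc1 : (p-1)⁻¹ ^ ((1:ℝ)/2) * ((2:ℝ) ^ ((1:ℝ)/2) * (2:ℝ) ^ ((p+1)*((2-p)/(2*p)))) ≤
        (p-1)⁻¹ ^ ((1:ℝ)/2) * 4 := by
      refine mul_le_mul_of_nonneg_left ?_ (by positivity)
      rw [← Real.rpow_add (by norm_num : (0:ℝ) < 2)]
      have h24 : (2:ℝ) ^ (2:ℝ) = 4 := by
        rw [show (4:ℝ) = 2^(2:ℕ) from by norm_num, ← Real.rpow_natCast 2 2]; norm_num
      rw [← h24]
      refine Real.rpow_le_rpow_of_exponent_le (by norm_num) ?_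
      rw [show (p+1)*((2-p)/(2*p)) = ((p+1)*(2-p))/(2*p) from by ring]
      have hfrac : ((p+1)*(2-p))/(2*p) ≤ 3/2 := by
        rw [div_le_iff₀ (by positivity : (0:ℝ) < 2*p)]
        nlinarith
      linarith
    calc (p-1)⁻¹ ^ ((1:ℝ)/2) * ((2:ℝ) ^ ((1:ℝ)/2) *
            (n ^ ((p-1)/p*(1/2)) * d ^ (1/p*(1/2))) *
            ((2:ℝ) ^ ((p+1)*((2-p)/(2*p))) * n ^ ((2-p)/(2*p))))
        = ((p-1)⁻¹ ^ ((1:ℝ)/2) * ((2:ℝ) ^ ((1:ℝ)/2) * (2:ℝ) ^ ((p+1)*((2-p)/(2*p))))) *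
            ((n ^ ((p-1)/p*(1/2)) * n ^ ((2-p)/(2*p))) * d ^ (1/p*(1/2))) := by ring
      _ = ((p-1)⁻¹ ^ ((1:ℝ)/2) * ((2:ℝ) ^ ((1:ℝ)/2) * (2:ℝ) ^ ((p+1)*((2-p)/(2*p))))) *
            ((n ^ (1/p*(1/2))) * d ^ (1/p*(1/2))) := by
          rw [← Real.rpow_add hn, show (p-1)/p*(1/2) + (2-p)/(2*p) = 1/p*(1/2) from by
            field_simp; ring]
      _ ≤ ((p-1)⁻¹ ^ ((1:ℝ)/2) * 4) * ((n ^ (1/p*(1/2))) * d ^ (1/p*(1/2))) := by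
          refine mul_le_mul_of_nonneg_right hc1 (by positivity)
      _ = 4 * (p-1)⁻¹ ^ ((1:ℝ)/2) * n ^ (1/p*(1/2)) * d ^ (1/p*(1/2)) := by ring
  -- transfer to ENNReal
  rw [hN, hD, h2e]
  calc (ENNReal.ofReal ((p-1)⁻¹ ^ (p/2)) *
      ((ENNReal.ofReal 2 * (ENNReal.ofReal n ^ ((p-1)/p) * ENNReal.ofReal d ^ (1/p))) ^ (p/2) *
       (ENNReal.ofReal (2 ^ p) * (ENNReal.ofReal n + ENNReal.ofReal n)) ^ ((2-p)/2))) ^ (1/p)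
      = ENNReal.ofReal ((((p-1)⁻¹ ^ (p/2)) * ((2 * (n ^ ((p-1)/p) * d ^ (1/p))) ^ (p/2) *
          ((2 ^ p) * (n + n)) ^ ((2-p)/2))) ^ (1/p)) := by
        rw [ENNReal.ofReal_rpow_of_pos hn, ENNReal.ofReal_rpow_of_pos hd,
          ← ENNReal.ofReal_mul (by positivity : (0:ℝ) ≤ n ^ ((p-1)/p)),
          ← ENNReal.ofReal_mul (by norm_num : (0:ℝ) ≤ 2),
          ENNReal.ofReal_rpow_of_pos (by positivity),
          ← ENNReal.ofReal_add hn.le hn.le,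
          ← ENNReal.ofReal_mul (by positivity : (0:ℝ) ≤ (2:ℝ)^p),
          ENNReal.ofReal_rpow_of_pos (by positivity),
          ← ENNReal.ofReal_mul (by positivity : (0:ℝ) ≤ (2 * (n ^ ((p-1)/p) * d ^ (1/p))) ^ (p/2)),
          ← ENNReal.ofReal_mul (Real.rpow_nonneg hip.le _),
          ENNReal.ofReal_rpow_of_pos (by positivity)]
    _ ≤ ENNReal.ofReal ((4 * (p-1)⁻¹ ^ ((1:ℝ)/2)) * (n ^ (1/p)) ^ ((1:ℝ)/2) *
          (d ^ (1/p)) ^ ((1:ℝ)/2)) := ENNReal.ofReal_le_ofReal hreal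
    _ = ENNReal.ofReal (4 * (p-1)⁻¹ ^ ((1:ℝ)/2)) * (ENNReal.ofReal n ^ (1/p)) ^ ((1:ℝ)/2) *
          (ENNReal.ofReal d ^ (1/p)) ^ ((1:ℝ)/2) := by
        rw [ENNReal.ofReal_rpow_of_pos hn, ENNReal.ofReal_rpow_of_pos (by positivity),
          ENNReal.ofReal_rpow_of_pos hd, ENNReal.ofReal_rpow_of_pos (by positivity),
          ← ENNReal.ofReal_mul (by positivity),
          ← ENNReal.ofReal_mul (by positivity)]

lemma main_bound {p : ℝ} (hp1 : 1 < p) (hp2 : p ≤ 2) {X : Type*} [MeasurableSpace X]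
    (μ : Measure X) [SigmaFinite μ] (K : ℝ → X → X → ℝ) (hK : IsHeatKernel μ K)
    (f : X → ℝ) (hfm : Measurable f) (hf : ∀ x, 0 ≤ f x)
    (hfLp : MemLp f (ENNReal.ofReal p) μ) (t : ℝ) (ht : 0 < t) :
    besovEnergy μ K p t f ^ (1 / p) ≤
      ENNReal.ofReal (4 * (p-1)⁻¹ ^ ((1:ℝ)/2)) * eLpNorm f (ENNReal.ofReal p) μ ^ ((1:ℝ)/2) *
        eLpNorm (fun x => heatOp μ K t f x - f x) (ENNReal.ofReal p) μ ^ ((1:ℝ)/2) := by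
  have hp0 : (0:ℝ) < p := by linarith
  have hpne : p - 1 ≠ 0 := by intro h; linarith [h]
  -- measurability basics
  have hKm : Measurable (fun z : X × X => K t z.1 z.2) := hK.measurable t
  have hKx : ∀ x, Measurable (fun y => K t x y) := fun x => by
    have : (fun y => K t x y) = (fun z : X × X => K t z.1 z.2) ∘ (fun y => (x, y)) := rfl
    rw [this]; exact hKm.comp measurable_prodMk_left
  have hKy : ∀ y, Measurable (fun x => K t x y) := fun y => by
    have : (fun x => K t x y) = (fun z : X × X => K t z.1 z.2) ∘ (fun x => (x, y)) := rfl
    rw [this]; exact hKm.comp measurable_prodMk_right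
  -- conservation in lintegral form
  have hcons : ∀ᵐ x ∂μ, ∫⁻ y, ENNReal.ofReal (K t x y) ∂μ = 1 := by
    filter_upwards [hK.conservative t ht] with x hx
    have hint : Integrable (fun y => K t x y) μ := by
      by_contra h
      rw [integral_undef h] at hx; norm_num at hx
    rw [← ofReal_integral_eq_lintegral_ofReal hint
      (Eventually.of_forall fun y => hK.nonneg t x y), hx, ENNReal.ofReal_one]
  have hconsy : ∀ᵐ y ∂μ, ∫⁻ x, ENNReal.ofReal (K t x y) ∂μ = 1 := by
    filter_upwards [hcons] with y hy
    rw [← hy]; exact lintegral_congr fun x => by rw [hK.symm]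
  -- base computations
  have base1 : ∀ g : X → ℝ≥0∞, Measurable g →
      ∫⁻ z : X × X, g z.1 * ENNReal.ofReal (K t z.1 z.2) ∂(μ.prod μ) = ∫⁻ x, g x ∂μ := by
    intro g hg
    rw [lintegral_prod _ (by fun_prop : Measurable fun z : X × X =>
      g z.1 * ENNReal.ofReal (K t z.1 z.2)).aemeasurable]
    calc ∫⁻ x, ∫⁻ y, g x * ENNReal.ofReal (K t x y) ∂μ ∂μ
        = ∫⁻ x, g x * ∫⁻ y, ENNReal.ofReal (K t x y) ∂μ ∂μ :=
          lintegral_congr fun x => lintegral_const_mul _ (hKx x).ennreal_ofReal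
      _ = ∫⁻ x, g x ∂μ := by
          refine lintegral_congr_ae ?_
          filter_upwards [hcons] with x hx
          rw [hx, mul_one]
  have base2 : ∀ g : X → ℝ≥0∞, Measurable g →
      ∫⁻ z : X × X, g z.2 * ENNReal.ofReal (K t z.1 z.2) ∂(μ.prod μ) = ∫⁻ x, g x ∂μ := by
    intro g hg
    rw [lintegral_prod_symm _ (by fun_prop : Measurable fun z : X × X =>
      g z.2 * ENNReal.ofReal (K t z.1 z.2)).aemeasurable]
    calc ∫⁻ y, ∫⁻ x, g y * ENNReal.ofReal (K t x y) ∂μ ∂μ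
        = ∫⁻ y, g y * ∫⁻ x, ENNReal.ofReal (K t x y) ∂μ ∂μ :=
          lintegral_congr fun y => lintegral_const_mul _ (hKy y).ennreal_ofReal
      _ = ∫⁻ y, g y ∂μ := by
          refine lintegral_congr_ae ?_
          filter_upwards [hconsy] with y hy
          rw [hy, mul_one]
  -- norms
  set N := ∫⁻ x, ENNReal.ofReal (f x ^ p) ∂μ with hNdef
  set D := ∫⁻ x, ENNReal.ofReal |heatOp μ K t f x - f x| ^ p ∂μ with hDdef
  have hofnz : ENNReal.ofReal p ≠ 0 := by
    simp only [ne_eq, ENNReal.ofReal_eq_zero, not_le]; linarith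
  have hsnorm_f : eLpNorm f (ENNReal.ofReal p) μ = N ^ (1/p) := by
    rw [eLpNorm_eq_lintegral_rpow_enorm_toReal hofnz ENNReal.ofReal_ne_top,
      ENNReal.toReal_ofReal hp0.le]
    congr 1
    exact lintegral_congr fun x => by
      rw [Real.enorm_eq_ofReal_abs, abs_of_nonneg (hf x),
        ENNReal.ofReal_rpow_of_nonneg (hf x) hp0.le]
  have hsnorm_d : eLpNorm (fun x => heatOp μ K t f x - f x) (ENNReal.ofReal p) μ = D ^ (1/p) := by
    rw [eLpNorm_eq_lintegral_rpow_enorm_toReal hofnz ENNReal.ofReal_ne_top,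
      ENNReal.toReal_ofReal hp0.le]
    congr 1
    exact lintegral_congr fun x => by rw [Real.enorm_eq_ofReal_abs]
  have hNtop : N ≠ ∞ := by
    intro h
    have h2 := hfLp.2
    rw [hsnorm_f, h, ENNReal.top_rpow_of_pos (by positivity)] at h2
    exact lt_irrefl _ h2
  -- heatOp measurability
  have hheat : Measurable (heatOp μ K t f) := by
    have hsm : StronglyMeasurable (fun z : X × X => K t z.1 z.2 * f z.2) :=
      (hKm.mul (hfm.comp measurable_snd)).stronglyMeasurable
    exact hsm.integral_prod_right'.measurable
  -- definitions of the three double integrals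
  set A := ∫⁻ z : X × X, ENNReal.ofReal ((f z.1 - f z.2) * (f z.1 ^ (p-1) - f z.2 ^ (p-1))) *
      ENNReal.ofReal (K t z.1 z.2) ∂(μ.prod μ) with hAdef
  set B := ∫⁻ z : X × X, ENNReal.ofReal ((f z.1 + f z.2) ^ p) *
      ENNReal.ofReal (K t z.1 z.2) ∂(μ.prod μ) with hBdef
  set R := ∫⁻ z : X × X, ENNReal.ofReal (f z.1 ^ (p-1) * f z.2) *
      ENNReal.ofReal (K t z.1 z.2) ∂(μ.prod μ) with hRdef
  set R' := ∫⁻ z : X × X, ENNReal.ofReal (f z.1 * f z.2 ^ (p-1)) *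
      ENNReal.ofReal (K t z.1 z.2) ∂(μ.prod μ) with hR'def
  -- besovEnergy as product integral
  have hEeq : besovEnergy μ K p t f = ∫⁻ z : X × X, ENNReal.ofReal (|f z.1 - f z.2| ^ p) *
      ENNReal.ofReal (K t z.1 z.2) ∂(μ.prod μ) := by
    exact (lintegral_prod _ (by fun_prop : Measurable fun z : X × X =>
      ENNReal.ofReal (|f z.1 - f z.2| ^ p) * ENNReal.ofReal (K t z.1 z.2)).aemeasurable).symm
  -- Hölder bound for the energy
  have hE : (∫⁻ z : X × X, ENNReal.ofReal (|f z.1 - f z.2| ^ p) *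
      ENNReal.ofReal (K t z.1 z.2) ∂(μ.prod μ)) ≤
      ENNReal.ofReal ((p-1)⁻¹ ^ (p/2)) * (A ^ (p/2) * B ^ ((2-p)/2)) := by
    have step1 : (∫⁻ z : X × X, ENNReal.ofReal (|f z.1 - f z.2| ^ p) *
        ENNReal.ofReal (K t z.1 z.2) ∂(μ.prod μ)) ≤
        ENNReal.ofReal ((p-1)⁻¹ ^ (p/2)) * ∫⁻ z : X × X,
          (ENNReal.ofReal ((f z.1 - f z.2) * (f z.1 ^ (p-1) - f z.2 ^ (p-1))) *
            ENNReal.ofReal (K t z.1 z.2)) ^ (p/2) *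
          (ENNReal.ofReal ((f z.1 + f z.2) ^ p) * ENNReal.ofReal (K t z.1 z.2)) ^ ((2-p)/2)
          ∂(μ.prod μ) := by
      rw [← lintegral_const_mul _ (by fun_prop)]
      exact lintegral_mono fun z => by
        have := key_ennreal (a := f z.1) (b := f z.2) (k := K t z.1 z.2) hp1 hp2
          (hf z.1) (hf z.2) (hK.nonneg t z.1 z.2)
        calc _ ≤ _ := this
          _ = _ := by ring
    refine step1.trans (mul_le_mul_right ?_ _)
    rcases eq_or_lt_of_le hp2 with hpe | hplt
    · subst hpe
      simp only [show ((2:ℝ)-2)/2 = 0 from by norm_num, show (2:ℝ)/2 = 1 from by norm_num,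
        ENNReal.rpow_one, ENNReal.rpow_zero, mul_one]
      exact le_of_eq hAdef.symm
    · have hconj : (2/p).HolderConjugate (2/(2-p)) := by
        rw [Real.holderConjugate_iff]; constructor
        · rw [lt_div_iff₀ hp0]; linarith
        · rw [inv_div, inv_div]; field_simp; ring
      have hhold := ENNReal.lintegral_mul_le_Lp_mul_Lq (μ.prod μ) hconj
        (by fun_prop : Measurable fun z : X × X =>
          (ENNReal.ofReal ((f z.1 - f z.2) * (f z.1 ^ (p-1) - f z.2 ^ (p-1))) *
            ENNReal.ofReal (K t z.1 z.2)) ^ (p/2)).aemeasurable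
        (by fun_prop : Measurable fun z : X × X =>
          (ENNReal.ofReal ((f z.1 + f z.2) ^ p) * ENNReal.ofReal (K t z.1 z.2)) ^
            ((2-p)/2)).aemeasurable
      refine hhold.trans ?_
      have e1 : ∀ z : X × X, ((ENNReal.ofReal ((f z.1 - f z.2) * (f z.1 ^ (p-1) - f z.2 ^ (p-1))) *
          ENNReal.ofReal (K t z.1 z.2)) ^ (p/2)) ^ (2/p) =
          ENNReal.ofReal ((f z.1 - f z.2) * (f z.1 ^ (p-1) - f z.2 ^ (p-1))) *
          ENNReal.ofReal (K t z.1 z.2) := fun z => by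
        rw [← ENNReal.rpow_mul, show (p/2) * (2/p) = 1 from by field_simp, ENNReal.rpow_one]
      have e2 : ∀ z : X × X, ((ENNReal.ofReal ((f z.1 + f z.2) ^ p) *
          ENNReal.ofReal (K t z.1 z.2)) ^ ((2-p)/2)) ^ (2/(2-p)) =
          ENNReal.ofReal ((f z.1 + f z.2) ^ p) * ENNReal.ofReal (K t z.1 z.2) := fun z => by
        rw [← ENNReal.rpow_mul, show ((2-p)/2) * (2/(2-p)) = 1 from by
          field_simp [sub_ne_zero.2 hplt.ne'], ENNReal.rpow_one]
      rw [lintegral_congr e1, lintegral_congr e2, one_div_div, one_div_div]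
  -- the identity A + (R' + R) = N + N
  have hid : A + (R' + R) = N + N := by
    have hGnn : ∀ z : X × X, 0 ≤ (f z.1 - f z.2) * (f z.1 ^ (p-1) - f z.2 ^ (p-1)) := by
      intro z
      rcases le_total (f z.2) (f z.1) with h | h
      · exact mul_nonneg (by linarith) (sub_nonneg.2 (Real.rpow_le_rpow (hf z.2) h (by linarith)))
      · have h2 := mul_nonneg (sub_nonneg.2 h)
          (sub_nonneg.2 (Real.rpow_le_rpow (hf z.1) h (by linarith : (0:ℝ) ≤ p - 1)))
        nlinarith [h2]
    calc A + (R' + R)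
        = ∫⁻ z : X × X, (ENNReal.ofReal ((f z.1 - f z.2) * (f z.1 ^ (p-1) - f z.2 ^ (p-1))) +
            (ENNReal.ofReal (f z.1 * f z.2 ^ (p-1)) + ENNReal.ofReal (f z.1 ^ (p-1) * f z.2))) *
            ENNReal.ofReal (K t z.1 z.2) ∂(μ.prod μ) := by
          rw [hAdef, hR'def, hRdef, ← lintegral_add_left (by fun_prop), ← lintegral_add_left (by fun_prop)]
          exact lintegral_congr fun z => by ring
      _ = ∫⁻ z : X × X, (ENNReal.ofReal (f z.1 ^ p) * ENNReal.ofReal (K t z.1 z.2) +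
            ENNReal.ofReal (f z.2 ^ p) * ENNReal.ofReal (K t z.1 z.2)) ∂(μ.prod μ) := by
          refine lintegral_congr fun z => ?_
          rw [← ENNReal.ofReal_add (mul_nonneg (hf z.1) (Real.rpow_nonneg (hf z.2) _))
              (mul_nonneg (Real.rpow_nonneg (hf z.1) _) (hf z.2)),
            ← ENNReal.ofReal_add (hGnn z) (add_nonneg
              (mul_nonneg (hf z.1) (Real.rpow_nonneg (hf z.2) _))
              (mul_nonneg (Real.rpow_nonneg (hf z.1) _) (hf z.2))),
            ← add_mul, ← ENNReal.ofReal_add (Real.rpow_nonneg (hf z.1) _)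
              (Real.rpow_nonneg (hf z.2) _)]
          congr 2
          linarith [cross_identity (a := f z.1) (b := f z.2) hp1 (hf z.1) (hf z.2)]
      _ = N + N := by
          rw [lintegral_add_left (by fun_prop)]
          rw [base1 (fun x => ENNReal.ofReal (f x ^ p)) (by fun_prop),
            base2 (fun x => ENNReal.ofReal (f x ^ p)) (by fun_prop)]
  -- symmetry R' = R
  have hRR : R' = R := by
    have e1 : R' = ∫⁻ y, ∫⁻ x, ENNReal.ofReal (f x * f y ^ (p-1)) *
        ENNReal.ofReal (K t x y) ∂μ ∂μ :=
      lintegral_prod_symm _ (by fun_prop : Measurable fun z : X × X =>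
        ENNReal.ofReal (f z.1 * f z.2 ^ (p-1)) * ENNReal.ofReal (K t z.1 z.2)).aemeasurable
    have e2 : R = ∫⁻ x, ∫⁻ y, ENNReal.ofReal (f x ^ (p-1) * f y) *
        ENNReal.ofReal (K t x y) ∂μ ∂μ :=
      lintegral_prod _ (by fun_prop : Measurable fun z : X × X =>
        ENNReal.ofReal (f z.1 ^ (p-1) * f z.2) * ENNReal.ofReal (K t z.1 z.2)).aemeasurable
    rw [e1, e2]
    exact lintegral_congr fun a => lintegral_congr fun b => by
      rw [hK.symm t b a, mul_comm (f b)]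
  -- A ≤ 2 * (N - R)
  have hNN : N + N ≠ ∞ := by
    simp [hNtop]
  have hA2 : A ≤ 2 * (N - R) := by
    have hfin : R' + R ≠ ∞ := by
      refine ne_top_of_le_ne_top hNN ?_
      calc R' + R ≤ A + (R' + R) := le_add_self
        _ = N + N := hid
    have hAeq : A = (N + N) - (R' + R) := ENNReal.eq_sub_of_add_eq hfin hid
    rw [hAeq, hRR]
    refine tsub_le_iff_right.2 ?_
    have h : N ≤ N - R + R := le_tsub_add
    calc N + N ≤ (N - R + R) + (N - R + R) := add_le_add h h
      _ = 2 * (N - R) + (R + R) := by ring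
  -- N - R ≤ N^((p-1)/p) * D^(1/p)
  have hNR : N - R ≤ N ^ ((p-1)/p) * D ^ (1/p) := by
    have hRiter : R = ∫⁻ x, ENNReal.ofReal (f x ^ (p-1)) *
        ∫⁻ y, ENNReal.ofReal (K t x y * f y) ∂μ ∂μ := by
      have e2 : R = ∫⁻ x, ∫⁻ y, ENNReal.ofReal (f x ^ (p-1) * f y) *
          ENNReal.ofReal (K t x y) ∂μ ∂μ :=
        lintegral_prod _ (by fun_prop : Measurable fun z : X × X =>
          ENNReal.ofReal (f z.1 ^ (p-1) * f z.2) * ENNReal.ofReal (K t z.1 z.2)).aemeasurable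
      rw [e2]
      refine lintegral_congr fun x => ?_
      rw [← lintegral_const_mul _ (show Measurable fun y => ENNReal.ofReal (K t x y * f y) from ((hKx x).mul hfm).ennreal_ofReal)]
      refine lintegral_congr fun y => ?_
      rw [← ENNReal.ofReal_mul (mul_nonneg (Real.rpow_nonneg (hf x) _) (hf y)),
        ← ENNReal.ofReal_mul (Real.rpow_nonneg (hf x) _)]
      exact congrArg ENNReal.ofReal (by ring)
    have hNiter : N = ∫⁻ x, ENNReal.ofReal (f x ^ (p-1)) * ENNReal.ofReal (f x) ∂μ := by
      refine lintegral_congr fun x => ?_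
      rw [← ENNReal.ofReal_mul (Real.rpow_nonneg (hf x) _)]
      refine congrArg ENNReal.ofReal ?_
      nth_rewrite 1 [show p = (p-1) + 1 from by ring]
      rw [Real.rpow_add' (hf x) (by intro h; linarith [h] : (p-1) + 1 ≠ 0), Real.rpow_one]
    have hPl : Measurable fun x => ∫⁻ y, ENNReal.ofReal (K t x y * f y) ∂μ := by
      exact Measurable.lintegral_prod_right (f := fun x y => ENNReal.ofReal (K t x y * f y))
        (by fun_prop : Measurable fun z : X × X => ENNReal.ofReal (K t z.1 z.2 * f z.2))
    have hsub : N - R ≤ ∫⁻ x, (ENNReal.ofReal (f x ^ (p-1)) * ENNReal.ofReal (f x) -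
        ENNReal.ofReal (f x ^ (p-1)) * ∫⁻ y, ENNReal.ofReal (K t x y * f y) ∂μ) ∂μ := by
      rw [hNiter, hRiter]
      refine tsub_le_iff_right.2 ?_
      rw [← lintegral_add_left (show Measurable fun x => ENNReal.ofReal (f x ^ (p-1)) * ENNReal.ofReal (f x) -
          ENNReal.ofReal (f x ^ (p-1)) * ∫⁻ y, ENNReal.ofReal (K t x y * f y) ∂μ from (by fun_prop : Measurable fun x =>
        ENNReal.ofReal (f x ^ (p-1)) * ENNReal.ofReal (f x)).sub
        ((by fun_prop : Measurable fun x => ENNReal.ofReal (f x ^ (p-1))).mul hPl))]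
      exact lintegral_mono fun x => le_tsub_add
    have hptw : ∀ x, ENNReal.ofReal (f x ^ (p-1)) * ENNReal.ofReal (f x) -
        ENNReal.ofReal (f x ^ (p-1)) * ∫⁻ y, ENNReal.ofReal (K t x y * f y) ∂μ ≤
        ENNReal.ofReal (f x ^ (p-1)) * ENNReal.ofReal |heatOp μ K t f x - f x| := by
      intro x
      by_cases hi : Integrable (fun y => K t x y * f y) μ
      · have hPleq : ∫⁻ y, ENNReal.ofReal (K t x y * f y) ∂μ =
            ENNReal.ofReal (heatOp μ K t f x) :=
          (ofReal_integral_eq_lintegral_ofReal hi (Eventually.of_forall fun y =>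
            mul_nonneg (hK.nonneg t x y) (hf y))).symm
        rw [hPleq]
        have h1 : ENNReal.ofReal (f x ^ (p-1)) * ENNReal.ofReal (f x) -
            ENNReal.ofReal (f x ^ (p-1)) * ENNReal.ofReal (heatOp μ K t f x) ≤
            ENNReal.ofReal (f x ^ (p-1)) *
              (ENNReal.ofReal (f x) - ENNReal.ofReal (heatOp μ K t f x)) := by
          refine tsub_le_iff_right.2 ?_
          rw [← mul_add]
          exact mul_le_mul_right le_tsub_add _
        refine h1.trans (mul_le_mul_right ?_ _)
        have hh : (0:ℝ) ≤ heatOp μ K t f x :=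
          integral_nonneg fun y => mul_nonneg (hK.nonneg t x y) (hf y)
        rcases le_total (f x) (heatOp μ K t f x) with h | h
        · rw [tsub_eq_zero_of_le (ENNReal.ofReal_le_ofReal h)]
          exact zero_le
        · rw [← ENNReal.ofReal_sub _ hh]
          refine ENNReal.ofReal_le_ofReal ?_
          rw [abs_sub_comm]
          exact le_abs_self _
      · have hPltop : ∫⁻ y, ENNReal.ofReal (K t x y * f y) ∂μ = ∞ := by
          by_contra h
          refine hi ⟨((hKx x).mul hfm).aestronglyMeasurable, ?_⟩
          rw [hasFiniteIntegral_iff_norm]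
          have heq : (∫⁻ a, ENNReal.ofReal ‖K t x a * f a‖ ∂μ) =
              ∫⁻ y, ENNReal.ofReal (K t x y * f y) ∂μ :=
            lintegral_congr fun y => by
              rw [Real.norm_eq_abs, abs_of_nonneg (mul_nonneg (hK.nonneg t x y) (hf y))]
          rw [heq]
          exact lt_top_iff_ne_top.2 h
        rw [hPltop]
        by_cases hz : ENNReal.ofReal (f x ^ (p-1)) = 0
        · rw [hz]; simp
        · rw [ENNReal.mul_top hz]; simp
    have hch : N - R ≤ ∫⁻ x, ENNReal.ofReal (f x ^ (p-1)) *
        ENNReal.ofReal |heatOp μ K t f x - f x| ∂μ :=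
      hsub.trans (lintegral_mono hptw)
    have hconj2 : (p/(p-1)).HolderConjugate p := by
      rw [Real.holderConjugate_iff]; constructor
      · rw [lt_div_iff₀ (by linarith : (0:ℝ) < p - 1)]; linarith
      · rw [inv_div]; field_simp; ring
    have hhold := ENNReal.lintegral_mul_le_Lp_mul_Lq μ hconj2
      (by fun_prop : Measurable fun x => ENNReal.ofReal (f x ^ (p-1))).aemeasurable
      ((by fun_prop : Measurable fun x =>
        ENNReal.ofReal |heatOp μ K t f x - f x|)).aemeasurable
    have hq : ∫⁻ x, ENNReal.ofReal (f x ^ (p-1)) ^ (p/(p-1)) ∂μ = N := by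
      refine lintegral_congr fun x => ?_
      rw [ENNReal.ofReal_rpow_of_nonneg (Real.rpow_nonneg (hf x) _)
          (div_nonneg hp0.le (by linarith)),
        ← Real.rpow_mul (hf x), show (p-1) * (p/(p-1)) = p from by field_simp]
    rw [hq, one_div_div] at hhold
    exact hch.trans hhold
  -- B bound
  have hB : B ≤ ENNReal.ofReal (2 ^ p) * (N + N) := by
    have hmono : B ≤ ∫⁻ z : X × X, ENNReal.ofReal (2 ^ p) *
        ((ENNReal.ofReal (f z.1 ^ p) + ENNReal.ofReal (f z.2 ^ p)) *
          ENNReal.ofReal (K t z.1 z.2)) ∂(μ.prod μ) := by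
      refine lintegral_mono fun z => ?_
      rw [← mul_assoc]
      refine mul_le_mul_left ?_ _
      rw [← ENNReal.ofReal_add (Real.rpow_nonneg (hf z.1) _) (Real.rpow_nonneg (hf z.2) _),
        ← ENNReal.ofReal_mul (by positivity : (0:ℝ) ≤ (2:ℝ)^p)]
      exact ENNReal.ofReal_le_ofReal (two_bound hp0 (hf z.1) (hf z.2))
    refine hmono.trans (le_of_eq ?_)
    rw [lintegral_const_mul _ (by fun_prop)]
    congr 1
    have hsplit : (∫⁻ z : X × X, (ENNReal.ofReal (f z.1 ^ p) + ENNReal.ofReal (f z.2 ^ p)) *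
        ENNReal.ofReal (K t z.1 z.2) ∂(μ.prod μ)) =
        (∫⁻ z : X × X, ENNReal.ofReal (f z.1 ^ p) * ENNReal.ofReal (K t z.1 z.2) ∂(μ.prod μ)) +
        ∫⁻ z : X × X, ENNReal.ofReal (f z.2 ^ p) * ENNReal.ofReal (K t z.1 z.2) ∂(μ.prod μ) := by
      rw [← lintegral_add_left (by fun_prop)]
      exact lintegral_congr fun z => by ring
    rw [hsplit, base1 (fun x => ENNReal.ofReal (f x ^ p)) (by fun_prop),
      base2 (fun x => ENNReal.ofReal (f x ^ p)) (by fun_prop), hNdef]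
  -- conclude
  rw [hEeq, hsnorm_f, hsnorm_d]
  exact final_compute hp1 hp2 hNtop hE (hA2.trans (mul_le_mul_right hNR 2)) hB

/-- **Dungey-type interpolation bound.** For `1 < p ≤ 2` there is a constant `C_p > 0`,
depending only on `p`, such that for every heat kernel, every nonnegative `f ∈ L^p(X,μ)`
and every `t > 0`,
`(∬ p_t(x,y)|f(x)−f(y)|^p)^{1/p} ≤ C_p ‖f‖_p^{1/2} ‖P_t f − f‖_p^{1/2}`. -/
theorem dungey_interpolation (p : ℝ) (hp1 : 1 < p) (hp2 : p ≤ 2) :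
    ∃ C : ℝ, 0 < C ∧
      ∀ (X : Type) [MetricSpace X] [MeasurableSpace X] [BorelSpace X]
        (μ : Measure X) [SigmaFinite μ] (K : ℝ → X → X → ℝ),
        IsHeatKernel μ K →
        ∀ f : X → ℝ, (∀ x, 0 ≤ f x) → MemLp f (ENNReal.ofReal p) μ →
        ∀ t : ℝ, 0 < t →
          besovEnergy μ K p t f ^ (1 / p) ≤
            ENNReal.ofReal C * eLpNorm f (ENNReal.ofReal p) μ ^ (1 / 2 : ℝ) *
              eLpNorm (fun x => heatOp μ K t f x - f x) (ENNReal.ofReal p) μ ^ (1 / 2 : ℝ) := by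
  refine ⟨4 * (p-1)⁻¹ ^ ((1:ℝ)/2), ?_, ?_⟩
  · have h : (0:ℝ) < (p-1)⁻¹ := inv_pos.2 (by linarith)
    positivity
  · intro X _ _ _ μ _ K hK f hf hfLp t ht
    obtain ⟨g₀, hg₀m, hfg₀⟩ := hfLp.1
    set g : X → ℝ := fun x => max (g₀ x) 0 with hgdef
    have hgm : Measurable g := hg₀m.measurable.max measurable_const
    have hfg : f =ᵐ[μ] g := by
      filter_upwards [hfg₀] with x hx
      rw [hgdef]
      simp only
      rw [← hx, max_eq_left (hf x)]
    have hg0 : ∀ x, 0 ≤ g x := fun x => le_max_right _ _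
    have hgLp : MemLp g (ENNReal.ofReal p) μ := hfLp.ae_eq hfg
    have hEg : besovEnergy μ K p t f = besovEnergy μ K p t g := by
      unfold besovEnergy
      refine lintegral_congr_ae ?_
      filter_upwards [hfg] with x hx
      refine lintegral_congr_ae ?_
      filter_upwards [hfg] with y hy
      rw [hx, hy]
    have hsf : eLpNorm f (ENNReal.ofReal p) μ = eLpNorm g (ENNReal.ofReal p) μ :=
      eLpNorm_congr_ae hfg
    have hheatg : ∀ x, heatOp μ K t f x = heatOp μ K t g x := fun x => by
      unfold heatOp
      refine integral_congr_ae ?_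
      filter_upwards [hfg] with y hy
      rw [hy]
    have hsd : eLpNorm (fun x => heatOp μ K t f x - f x) (ENNReal.ofReal p) μ =
        eLpNorm (fun x => heatOp μ K t g x - g x) (ENNReal.ofReal p) μ := by
      refine eLpNorm_congr_ae ?_
      filter_upwards [hfg] with x hx
      rw [hheatg x, hx]
    rw [hEg, hsf, hsd]
    exact main_bound hp1 hp2 μ K hK g hgm hg0 hgLp t ht

end BesovDirichlet
end
end

section
/- Assume the ultracontractive bound. Let 1 ≤ p, q < ∞ and α > 0. There exists a constant C > 0, depending only on p, q, α, β and C₀, such that for every f ∈ B^{p,α}(X) ∩ L^q(X,μ): sup_{s>0} s^{1 + qα/β} · μ({x ∈ X : |f(x)| > s})^{1/p} ≤ C · ‖f‖_{p,α} · ‖f‖_{L^q(X,μ)}^{qα/β}. -/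
open MeasureTheory ENNReal Metric Filter

noncomputable section

namespace BesovDirichlet

variable {X : Type*} [MeasurableSpace X]

/-- Ultracontractive bound `p_t(x,y) ≤ C₀ t^{−β}`. -/
def Ultracontractive (μ : Measure X) (K : ℝ → X → X → ℝ) (C₀ β : ℝ) : Prop :=
  ∀ t : ℝ, 0 < t → ∀ᵐ xy ∂(μ.prod μ), K t xy.1 xy.2 ≤ C₀ * t ^ (-β)

lemma besovEnergy_congr {μ : Measure X} {K : ℝ → X → X → ℝ} {p t : ℝ} {f g : X → ℝ}
    (hfg : f =ᵐ[μ] g) : besovEnergy μ K p t f = besovEnergy μ K p t g := by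
  refine lintegral_congr_ae ?_
  filter_upwards [hfg] with x hx
  refine lintegral_congr_ae ?_
  filter_upwards [hfg] with y hy
  rw [hx, hy]

lemma besovSeminorm_congr {μ : Measure X} {K : ℝ → X → X → ℝ} {p α : ℝ} {f g : X → ℝ}
    (hfg : f =ᵐ[μ] g) : besovSeminorm μ K p α f = besovSeminorm μ K p α g := by
  unfold besovSeminorm
  exact iSup_congr fun t => iSup_congr fun _ => by rw [besovEnergy_congr hfg]

/-- The key inequality: for measurable `f`, every `t, s > 0`,
`μ{|f|>s} ≤ C₀ t^{-β} μ{|f|>s/2} μ{|f|>s} + (2/s)^p E_t(f)`. -/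
lemma key_ineq {μ : Measure X} [SigmaFinite μ] {K : ℝ → X → X → ℝ}
    (hK : IsHeatKernel μ K) {C₀ β : ℝ} (hU : Ultracontractive μ K C₀ β)
    {f : X → ℝ} (hf : Measurable f) {p : ℝ} (hp : 0 < p)
    {t s : ℝ} (ht : 0 < t) (hs : 0 < s) :
    μ {x | s < |f x|} ≤
      ENNReal.ofReal (C₀ * t ^ (-β)) * μ {x | s / 2 < |f x|} * μ {x | s < |f x|} +
        ENNReal.ofReal ((2 / s) ^ p) * besovEnergy μ K p t f := by
  set A : Set X := {x | s < |f x|} with hA_def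
  set B : Set X := {x | s / 2 < |f x|} with hB_def
  have hA : MeasurableSet A := measurableSet_lt measurable_const hf.abs
  have hB : MeasurableSet B := measurableSet_lt measurable_const hf.abs
  set c : ℝ≥0∞ := ENNReal.ofReal ((2 / s) ^ p) with hc_def
  have hc_ne_top : c ≠ ∞ := ofReal_ne_top
  set D : ℝ≥0∞ := ENNReal.ofReal (C₀ * t ^ (-β)) with hD_def
  set Ein : X → ℝ≥0∞ :=
    fun x => ∫⁻ y, ENNReal.ofReal (|f x - f y| ^ p) * ENNReal.ofReal (K t x y) ∂μ with hEin_def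
  -- conservativity in lintegral form
  have hcons : ∀ᵐ x ∂μ, (∫⁻ y, ENNReal.ofReal (K t x y) ∂μ) = 1 := by
    filter_upwards [hK.conservative t ht] with x hx
    have hint : Integrable (fun y => K t x y) μ := by
      by_contra h
      rw [integral_undef h] at hx
      norm_num at hx
    rw [← ofReal_integral_eq_lintegral_ofReal hint
      (Filter.Eventually.of_forall fun y => hK.nonneg t x y), hx]
    simp
  -- ultracontractivity in iterated form
  have hultra : ∀ᵐ x ∂μ, ∀ᵐ y ∂μ, K t x y ≤ C₀ * t ^ (-β) :=
    Measure.ae_ae_of_ae_prod (hU t ht)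
  -- main pointwise bound: for a.e. x ∈ A, 1 ≤ D * μ B + c * Ein x
  have hmain : ∀ᵐ x ∂(μ.restrict A), (1 : ℝ≥0∞) ≤ D * μ B + c * Ein x := by
    filter_upwards [ae_restrict_of_ae hcons, ae_restrict_of_ae hultra, ae_restrict_mem hA]
      with x hx hxu hxA
    -- split the kernel integral over B and Bᶜ
    have hsplit : (1 : ℝ≥0∞) =
        (∫⁻ y in B, ENNReal.ofReal (K t x y) ∂μ) +
          ∫⁻ y in Bᶜ, ENNReal.ofReal (K t x y) ∂μ := by
      rw [lintegral_add_compl _ hB, hx]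
    have h1 : (∫⁻ y in B, ENNReal.ofReal (K t x y) ∂μ) ≤ D * μ B := by
      calc (∫⁻ y in B, ENNReal.ofReal (K t x y) ∂μ)
          ≤ ∫⁻ _ in B, D ∂μ := by
            refine lintegral_mono_ae ?_
            filter_upwards [ae_restrict_of_ae hxu] with y hy
            exact ENNReal.ofReal_le_ofReal hy
        _ = D * μ B := by rw [setLIntegral_const]
    have h2 : (∫⁻ y in Bᶜ, ENNReal.ofReal (K t x y) ∂μ) ≤ c * Ein x := by
      calc (∫⁻ y in Bᶜ, ENNReal.ofReal (K t x y) ∂μ)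
          ≤ ∫⁻ y in Bᶜ,
              c * (ENNReal.ofReal (|f x - f y| ^ p) * ENNReal.ofReal (K t x y)) ∂μ := by
            refine lintegral_mono_ae ?_
            filter_upwards [ae_restrict_mem hB.compl] with y hy
            have hfy : |f y| ≤ s / 2 := le_of_not_gt hy
            have hΔ : s / 2 ≤ |f x - f y| := by
              have hxA' : s < |f x| := hxA
              have := abs_sub_abs_le_abs_sub (f x) (f y)
              linarith
            have hone : (1 : ℝ) ≤ (2 / s) ^ p * |f x - f y| ^ p := by
              have h2s : (0 : ℝ) < 2 / s := by positivity
              have : (1 : ℝ) ≤ (2 / s) * |f x - f y| := by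
                calc (1 : ℝ) = (2 / s) * (s / 2) := by field_simp
                  _ ≤ (2 / s) * |f x - f y| := by
                      exact mul_le_mul_of_nonneg_left hΔ h2s.le
              calc (1 : ℝ) = 1 ^ p := (Real.one_rpow p).symm
                _ ≤ ((2 / s) * |f x - f y|) ^ p :=
                    Real.rpow_le_rpow zero_le_one this hp.le
                _ = (2 / s) ^ p * |f x - f y| ^ p :=
                    Real.mul_rpow h2s.le (abs_nonneg _)
            have hK_le : K t x y ≤ (2 / s) ^ p * |f x - f y| ^ p * K t x y := by
              nlinarith [hK.nonneg t x y]
            calc ENNReal.ofReal (K t x y)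
                ≤ ENNReal.ofReal ((2 / s) ^ p * (|f x - f y| ^ p * K t x y)) := by
                  refine ENNReal.ofReal_le_ofReal ?_
                  rw [← mul_assoc]; exact hK_le
              _ = c * (ENNReal.ofReal (|f x - f y| ^ p) * ENNReal.ofReal (K t x y)) := by
                  rw [ENNReal.ofReal_mul (by positivity),
                    ENNReal.ofReal_mul (by positivity)]
        _ = c * ∫⁻ y in Bᶜ,
              ENNReal.ofReal (|f x - f y| ^ p) * ENNReal.ofReal (K t x y) ∂μ :=
            lintegral_const_mul' _ _ hc_ne_top
        _ ≤ c * Ein x := by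
            exact mul_le_mul_right (setLIntegral_le_lintegral _ _) _
    calc (1 : ℝ≥0∞) = _ + _ := hsplit
      _ ≤ D * μ B + c * Ein x := add_le_add h1 h2
  -- integrate over A
  calc μ A = ∫⁻ _ in A, 1 ∂μ := by rw [setLIntegral_const, one_mul]
    _ ≤ ∫⁻ x in A, (D * μ B + c * Ein x) ∂μ := lintegral_mono_ae hmain
    _ = D * μ B * μ A + ∫⁻ x in A, c * Ein x ∂μ := by
        rw [lintegral_add_left measurable_const, setLIntegral_const]
    _ ≤ D * μ B * μ A + c * besovEnergy μ K p t f := by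
        refine add_le_add_right ?_ _
        rw [lintegral_const_mul' _ _ hc_ne_top]
        exact mul_le_mul_right (setLIntegral_le_lintegral _ _) _

/-- **Weak type estimate.** Under the ultracontractive bound, for `f ∈ B^{p,α}(X) ∩ L^q(X,μ)`,
`sup_{s>0} s^{1+qα/β} μ({|f| > s})^{1/p} ≤ C ‖f‖_{p,α} ‖f‖_q^{qα/β}` with `C`
depending only on `p, q, α, β, C₀`. -/
theorem weak_type_estimate (p q α β C₀ : ℝ)
    (hp : 1 ≤ p) (hq : 1 ≤ q) (hα : 0 < α) (hβ : 0 < β) (hC₀ : 0 < C₀) :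
    ∃ C : ℝ, 0 < C ∧
      ∀ (X : Type) [MetricSpace X] [MeasurableSpace X] [BorelSpace X]
        (μ : Measure X) [SigmaFinite μ] (K : ℝ → X → X → ℝ),
        IsHeatKernel μ K → Ultracontractive μ K C₀ β →
        ∀ f : X → ℝ, MemBesov μ K p α f → MemLp f (ENNReal.ofReal q) μ →
        ∀ s : ℝ, 0 < s →
          ENNReal.ofReal (s ^ (1 + q * α / β)) * μ {x | s < |f x|} ^ (1 / p) ≤
            ENNReal.ofReal C * besovSeminorm μ K p α f *
              eLpNorm f (ENNReal.ofReal q) μ ^ (q * α / β) := by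
  have hp0 : (0 : ℝ) < p := lt_of_lt_of_le one_pos hp
  have hq0 : (0 : ℝ) < q := lt_of_lt_of_le one_pos hq
  refine ⟨2 ^ (1 / p) * 2 * (2 * C₀) ^ (α / β) * 2 ^ (q * α / β), by positivity, ?_⟩
  intro X _ _ _ μ _ K hK hU f hfB hfq s hs
  set C : ℝ := 2 ^ (1 / p) * 2 * (2 * C₀) ^ (α / β) * 2 ^ (q * α / β) with hC_def
  -- replace f by a measurable representative
  obtain ⟨g, hg, hfg⟩ : ∃ g : X → ℝ, Measurable g ∧ f =ᵐ[μ] g :=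
    ⟨hfq.1.mk f, hfq.1.stronglyMeasurable_mk.measurable, hfq.1.ae_eq_mk⟩
  have hset : μ {x | s < |f x|} = μ {x | s < |g x|} := by
    refine measure_congr ?_
    filter_upwards [hfg] with x hx
    show (s < |f x|) = (s < |g x|)
    rw [hx]
  have hLeq : eLpNorm f (ENNReal.ofReal q) μ = eLpNorm g (ENNReal.ofReal q) μ :=
    eLpNorm_congr_ae hfg
  rw [hset, besovSeminorm_congr hfg, hLeq]
  have hgq : MemLp g (ENNReal.ofReal q) μ := hfq.ae_eq hfg
  set L : ℝ≥0∞ := eLpNorm g (ENNReal.ofReal q) μ with hL_def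
  have hL_ne_top : L ≠ ∞ := hgq.2.ne
  have hq_ne_zero : (ENNReal.ofReal q) ≠ 0 := by
    simp [ENNReal.ofReal_eq_zero, not_le, hq0]
  have hq_toReal : (ENNReal.ofReal q).toReal = q := ENNReal.toReal_ofReal hq0.le
  -- trivial case L = 0
  by_cases hL0 : L = 0
  · have hg0 : g =ᵐ[μ] 0 := (eLpNorm_eq_zero_iff hgq.1 hq_ne_zero).mp hL0
    have : μ {x | s < |g x|} = 0 := by
      refine measure_mono_null ?_ (ae_iff.mp hg0)
      intro x hx
      simp only [Set.mem_setOf_eq, Pi.zero_apply]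
      intro h0
      simp only [Set.mem_setOf_eq, h0, abs_zero] at hx
      exact absurd hx (not_lt.mpr hs.le)
    rw [this, ENNReal.zero_rpow_of_pos (by positivity), mul_zero]
    exact zero_le
  -- main case
  set ℓ : ℝ := L.toReal with hℓ_def
  have hℓpos : 0 < ℓ := ENNReal.toReal_pos hL0 hL_ne_top
  have hLℓ : L = ENNReal.ofReal ℓ := (ENNReal.ofReal_toReal hL_ne_top).symm
  set A : Set X := {x | s < |g x|} with hA_def
  set B : Set X := {x | s / 2 < |g x|} with hB_def
  -- Chebyshev: μ B ≤ ofReal ((2/s)^q * ℓ^q)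
  have hcheb : ENNReal.ofReal ((s / 2) ^ q) * μ B ≤ ENNReal.ofReal (ℓ ^ q) := by
    have h := mul_meas_ge_le_pow_eLpNorm' μ hq_ne_zero ofReal_ne_top hgq.1
      (ENNReal.ofReal (s / 2))
    rw [hq_toReal] at h
    have hsub : B ⊆ {x | ENNReal.ofReal (s / 2) ≤ (‖g x‖₊ : ℝ≥0∞)} := by
      intro x hx
      simp only [Set.mem_setOf_eq]
      have : (‖g x‖₊ : ℝ≥0∞) = ENNReal.ofReal |g x| := by
        rw [← Real.norm_eq_abs, ofReal_norm, enorm_eq_nnnorm]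
      rw [this]
      exact ENNReal.ofReal_le_ofReal (le_of_lt hx)
    calc ENNReal.ofReal ((s / 2) ^ q) * μ B
        = ENNReal.ofReal (s / 2) ^ q * μ B := by
          rw [ENNReal.ofReal_rpow_of_pos (by positivity)]
      _ ≤ ENNReal.ofReal (s / 2) ^ q * μ {x | ENNReal.ofReal (s / 2) ≤ (‖g x‖₊ : ℝ≥0∞)} :=
          mul_le_mul_right (measure_mono hsub) _
      _ ≤ L ^ q := h
      _ = ENNReal.ofReal (ℓ ^ q) := by
          rw [hLℓ, ENNReal.ofReal_rpow_of_pos hℓpos]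
  have hμB : μ B ≤ ENNReal.ofReal ((2 / s) ^ q * ℓ ^ q) := by
    have h1 : ENNReal.ofReal ((2 / s) ^ q) * ENNReal.ofReal ((s / 2) ^ q) = 1 := by
      rw [← ENNReal.ofReal_mul (by positivity), ← Real.mul_rpow (by positivity) (by positivity)]
      have : (2 / s) * (s / 2) = 1 := by field_simp
      rw [this, Real.one_rpow, ENNReal.ofReal_one]
    calc μ B = (ENNReal.ofReal ((2 / s) ^ q) * ENNReal.ofReal ((s / 2) ^ q)) * μ B := by
          rw [h1, one_mul]
      _ = ENNReal.ofReal ((2 / s) ^ q) * (ENNReal.ofReal ((s / 2) ^ q) * μ B) := by ring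
      _ ≤ ENNReal.ofReal ((2 / s) ^ q) * ENNReal.ofReal (ℓ ^ q) :=
          mul_le_mul_right hcheb _
      _ = ENNReal.ofReal ((2 / s) ^ q * ℓ ^ q) := by
          rw [← ENNReal.ofReal_mul (by positivity)]
  have hμB_lt_top : μ B < ∞ := lt_of_le_of_lt hμB ofReal_lt_top
  have hμA_le : μ A ≤ μ B := by
    refine measure_mono ?_
    intro x hx
    simp only [hA_def, hB_def, Set.mem_setOf_eq] at *
    linarith
  have hμA_ne_top : μ A ≠ ∞ := (lt_of_le_of_lt hμA_le hμB_lt_top).ne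
  -- choose t
  set t : ℝ := (2 * C₀ * ((2 / s) ^ q * ℓ ^ q)) ^ (1 / β) with ht_def
  have hbase : (0 : ℝ) < 2 * C₀ * ((2 / s) ^ q * ℓ ^ q) := by positivity
  have ht : 0 < t := Real.rpow_pos_of_pos hbase _
  have htβ : t ^ (-β) = (2 * C₀ * ((2 / s) ^ q * ℓ ^ q))⁻¹ := by
    rw [ht_def, ← Real.rpow_mul hbase.le,
      show (1 / β) * (-β) = (-1 : ℝ) by field_simp,
      Real.rpow_neg_one]
  have hXne : (2 / s) ^ q * ℓ ^ q ≠ 0 := by positivity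
  have hhalf : C₀ * t ^ (-β) * ((2 / s) ^ q * ℓ ^ q) = 1 / 2 := by
    rw [htβ]
    field_simp
  have hD_half : ENNReal.ofReal (C₀ * t ^ (-β)) * μ B ≤ 2⁻¹ := by
    calc ENNReal.ofReal (C₀ * t ^ (-β)) * μ B
        ≤ ENNReal.ofReal (C₀ * t ^ (-β)) * ENNReal.ofReal ((2 / s) ^ q * ℓ ^ q) :=
          mul_le_mul_right hμB _
      _ = ENNReal.ofReal (C₀ * t ^ (-β) * ((2 / s) ^ q * ℓ ^ q)) :=
          (ENNReal.ofReal_mul (by positivity)).symm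
      _ = 2⁻¹ := by
          rw [hhalf, one_div, ENNReal.ofReal_inv_of_pos two_pos, ENNReal.ofReal_ofNat]
  set E : ℝ≥0∞ := besovEnergy μ K p t g with hE_def
  set c : ℝ≥0∞ := ENNReal.ofReal ((2 / s) ^ p) with hc_def
  have hkey : μ A ≤ 2⁻¹ * μ A + c * E := by
    calc μ A ≤ ENNReal.ofReal (C₀ * t ^ (-β)) * μ B * μ A + c * E :=
          key_ineq hK hU hg hp0 ht hs
      _ ≤ 2⁻¹ * μ A + c * E := add_le_add_left (mul_le_mul_left hD_half _) _
  have hhalfμ : 2⁻¹ * μ A ≠ ∞ :=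
    ENNReal.mul_ne_top (by simp) hμA_ne_top
  have h2 : 2⁻¹ * μ A ≤ c * E := by
    have h3 : 2⁻¹ * μ A + 2⁻¹ * μ A ≤ 2⁻¹ * μ A + c * E := by
      calc 2⁻¹ * μ A + 2⁻¹ * μ A = μ A := by
            rw [← add_mul, ENNReal.inv_two_add_inv_two, one_mul]
        _ ≤ 2⁻¹ * μ A + c * E := hkey
    exact (ENNReal.add_le_add_iff_left hhalfμ).mp h3
  have hμA2 : μ A ≤ 2 * (c * E) := by
    calc μ A = 2 * (2⁻¹ * μ A) := by
          rw [← mul_assoc, ENNReal.mul_inv_cancel two_ne_zero ENNReal.ofNat_ne_top, one_mul]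
      _ ≤ 2 * (c * E) := mul_le_mul_right h2 _
  -- Besov seminorm bound on the energy
  set N : ℝ≥0∞ := besovSeminorm μ K p α g with hN_def
  have h1p : (0 : ℝ) ≤ 1 / p := by positivity
  have h0 : ENNReal.ofReal (t ^ (-α)) * E ^ (1 / p) ≤ N :=
    le_iSup₂ (f := fun (u : ℝ) (_ : 0 < u) =>
      ENNReal.ofReal (u ^ (-α)) * besovEnergy μ K p u g ^ (1 / p)) t ht
  have hcancel : ENNReal.ofReal (t ^ α) * ENNReal.ofReal (t ^ (-α)) = 1 := by
    rw [← ENNReal.ofReal_mul (by positivity), ← Real.rpow_add ht, add_neg_cancel,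
      Real.rpow_zero, ENNReal.ofReal_one]
  have hEN : E ^ (1 / p) ≤ ENNReal.ofReal (t ^ α) * N := by
    calc E ^ (1 / p) = 1 * E ^ (1 / p) := (one_mul _).symm
      _ = ENNReal.ofReal (t ^ α) * (ENNReal.ofReal (t ^ (-α)) * E ^ (1 / p)) := by
          rw [← mul_assoc, hcancel]
      _ ≤ ENNReal.ofReal (t ^ α) * N := mul_le_mul_right h0 _
  have h2s : (0 : ℝ) < 2 / s := by positivity
  have hμArp : μ A ^ (1 / p) ≤ ENNReal.ofReal (2 ^ (1 / p) * (2 / s)) * E ^ (1 / p) := by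
    calc μ A ^ (1 / p) ≤ (2 * (c * E)) ^ (1 / p) := ENNReal.rpow_le_rpow hμA2 h1p
      _ = (ENNReal.ofReal (2 * (2 / s) ^ p) * E) ^ (1 / p) := by
          rw [← mul_assoc]
          congr 1
          rw [ENNReal.ofReal_mul (by norm_num), ENNReal.ofReal_ofNat]
      _ = ENNReal.ofReal (2 * (2 / s) ^ p) ^ (1 / p) * E ^ (1 / p) :=
          ENNReal.mul_rpow_of_nonneg _ _ h1p
      _ = ENNReal.ofReal ((2 * (2 / s) ^ p) ^ (1 / p)) * E ^ (1 / p) := by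
          rw [ENNReal.ofReal_rpow_of_pos (by positivity)]
      _ = ENNReal.ofReal (2 ^ (1 / p) * (2 / s)) * E ^ (1 / p) := by
          congr 2
          rw [Real.mul_rpow (by norm_num) (by positivity), ← Real.rpow_mul h2s.le,
            mul_one_div_cancel hp0.ne', Real.rpow_one]
  set e : ℝ := q * α / β with he_def
  have hXsplit : ((2 / s) ^ q * ℓ ^ q) ^ (α / β) = (2 / s) ^ e * ℓ ^ e := by
    rw [Real.mul_rpow (by positivity) (by positivity), ← Real.rpow_mul h2s.le,
      ← Real.rpow_mul hℓpos.le, show q * (α / β) = e by rw [he_def]; ring]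
  have htα : t ^ α = (2 * C₀) ^ (α / β) * ((2 / s) ^ e * ℓ ^ e) := by
    rw [ht_def, ← Real.rpow_mul hbase.le,
      show (1 / β) * α = α / β by ring,
      Real.mul_rpow (by positivity) (by positivity), hXsplit]
  have hLpow : L ^ e = ENNReal.ofReal (ℓ ^ e) := by
    rw [hLℓ, ENNReal.ofReal_rpow_of_pos hℓpos]
  have hreal : s ^ (1 + e) * (2 ^ (1 / p) * (2 / s)) * t ^ α = C * ℓ ^ e := by
    have hs2 : s * (2 / s) = 2 := by field_simp
    have hse : s ^ e * (2 / s) ^ e = 2 ^ e := by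
      rw [← Real.mul_rpow hs.le h2s.le, hs2]
    have hsadd : s ^ (1 + e) = s * s ^ e := by
      rw [Real.rpow_add hs, Real.rpow_one]
    calc s ^ (1 + e) * (2 ^ (1 / p) * (2 / s)) * t ^ α
        = (s * (2 / s)) * (s ^ e * (2 / s) ^ e) *
            (2 ^ (1 / p) * ((2 * C₀) ^ (α / β) * ℓ ^ e)) := by
          rw [hsadd, htα]; ring
      _ = 2 * 2 ^ e * (2 ^ (1 / p) * ((2 * C₀) ^ (α / β) * ℓ ^ e)) := by
          rw [hs2, hse]
      _ = C * ℓ ^ e := by rw [hC_def]; ring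
  calc ENNReal.ofReal (s ^ (1 + q * α / β)) * μ A ^ (1 / p)
      ≤ ENNReal.ofReal (s ^ (1 + e)) *
          (ENNReal.ofReal (2 ^ (1 / p) * (2 / s)) * E ^ (1 / p)) :=
        mul_le_mul_right hμArp _
    _ ≤ ENNReal.ofReal (s ^ (1 + e)) *
          (ENNReal.ofReal (2 ^ (1 / p) * (2 / s)) * (ENNReal.ofReal (t ^ α) * N)) :=
        mul_le_mul_right (mul_le_mul_right hEN _) _
    _ = ENNReal.ofReal (s ^ (1 + e)) * ENNReal.ofReal (2 ^ (1 / p) * (2 / s)) *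
          ENNReal.ofReal (t ^ α) * N := by
        rw [← mul_assoc, ← mul_assoc]
    _ = ENNReal.ofReal (s ^ (1 + e) * (2 ^ (1 / p) * (2 / s)) * t ^ α) * N := by
        rw [← ENNReal.ofReal_mul (by positivity), ← ENNReal.ofReal_mul (by positivity)]
    _ = ENNReal.ofReal (C * ℓ ^ e) * N := by rw [hreal]
    _ = ENNReal.ofReal C * N * L ^ e := by
        rw [ENNReal.ofReal_mul (by positivity), ← hLpow, mul_right_comm]

end BesovDirichlet
end
end

section
/- Assume the ultracontractive bound and let 0 < α < β. There exists a constant C_iso > 0, depending only on α, β and C₀, such that for every measurable set E ⊆ X with μ(E) < ∞ and 1_E ∈ B^{1,α}(X), one has the isoperimetric-type inequality μ(E)^{(β−α)/β} ≤ C_iso · ‖1_E‖_{1,α}. -/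
open MeasureTheory ENNReal Metric Filter

noncomputable section

namespace BesovDirichlet

variable {X : Type*} [MeasurableSpace X]

lemma key_estimate {X : Type} [MeasurableSpace X] (μ : Measure X) [SigmaFinite μ]
    (K : ℝ → X → X → ℝ) (hK : IsHeatKernel μ K) {C₀ β : ℝ}
    (hU : Ultracontractive μ K C₀ β) {E : Set X} (hE : MeasurableSet E)
    {t : ℝ} (ht : 0 < t) :
    μ E ≤ ENNReal.ofReal (C₀ * t ^ (-β)) * (μ E * μ E) +
      besovEnergy μ K 1 t (E.indicator fun _ => (1 : ℝ)) := by
  set f : X → ℝ := E.indicator fun _ => (1 : ℝ) with hf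
  set κ : X → X → ℝ≥0∞ := fun x y => ENNReal.ofReal (K t x y) with hκ
  have hκmeas : Measurable fun xy : X × X => κ xy.1 xy.2 := (hK.measurable t).ennreal_ofReal
  -- conservativity in lintegral form
  have hcons : ∀ᵐ x ∂μ, (∫⁻ y, κ x y ∂μ) = 1 := by
    filter_upwards [hK.conservative t ht] with x hx
    by_cases hint : Integrable (fun y => K t x y) μ
    · rw [hκ]
      rw [← ofReal_integral_eq_lintegral_ofReal hint (ae_of_all _ fun y => hK.nonneg t x y), hx,
        ENNReal.ofReal_one]
    · rw [integral_undef hint] at hx; norm_num at hx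
  have h1 : (∫⁻ x in E, ∫⁻ y, κ x y ∂μ ∂μ) = μ E := by
    rw [setLIntegral_congr_fun_ae hE (hcons.mono fun x hx _ => hx)]
    exact setLIntegral_one E
  have h2 : (∫⁻ x in E, ∫⁻ y in E, κ x y ∂μ ∂μ) ≤
      ENNReal.ofReal (C₀ * t ^ (-β)) * (μ E * μ E) := by
    have heq : (∫⁻ x in E, ∫⁻ y in E, κ x y ∂μ ∂μ) =
        ∫⁻ xy in E ×ˢ E, κ xy.1 xy.2 ∂(μ.prod μ) := by
      rw [← Measure.prod_restrict, lintegral_prod _ hκmeas.aemeasurable]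
    rw [heq]
    calc (∫⁻ xy in E ×ˢ E, κ xy.1 xy.2 ∂(μ.prod μ))
        ≤ ∫⁻ _ in E ×ˢ E, ENNReal.ofReal (C₀ * t ^ (-β)) ∂(μ.prod μ) := by
          refine lintegral_mono_ae (ae_restrict_of_ae ?_)
          filter_upwards [hU t ht] with xy h
          exact ENNReal.ofReal_le_ofReal h
      _ = ENNReal.ofReal (C₀ * t ^ (-β)) * (μ E * μ E) := by
          rw [setLIntegral_const, Measure.prod_prod]
  have h3 : (∫⁻ x in E, ∫⁻ y in Eᶜ, κ x y ∂μ ∂μ) ≤ besovEnergy μ K 1 t f := by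
    have hpt : ∀ᵐ x ∂μ, x ∈ E → (∫⁻ y in Eᶜ, κ x y ∂μ) =
        ∫⁻ y in Eᶜ, ENNReal.ofReal (|f x - f y| ^ (1 : ℝ)) * κ x y ∂μ := by
      refine ae_of_all _ fun x hx => ?_
      refine setLIntegral_congr_fun hE.compl (fun y hy => ?_)
      simp [hf, Set.indicator_of_mem hx, Set.indicator_of_notMem hy, Real.rpow_one]
    calc (∫⁻ x in E, ∫⁻ y in Eᶜ, κ x y ∂μ ∂μ)
        = ∫⁻ x in E, ∫⁻ y in Eᶜ, ENNReal.ofReal (|f x - f y| ^ (1 : ℝ)) * κ x y ∂μ ∂μ :=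
          setLIntegral_congr_fun_ae hE hpt
      _ ≤ ∫⁻ x in E, ∫⁻ y, ENNReal.ofReal (|f x - f y| ^ (1 : ℝ)) * κ x y ∂μ ∂μ :=
          lintegral_mono fun x => setLIntegral_le_lintegral _ _
      _ ≤ ∫⁻ x, ∫⁻ y, ENNReal.ofReal (|f x - f y| ^ (1 : ℝ)) * κ x y ∂μ ∂μ :=
          setLIntegral_le_lintegral _ _
      _ = besovEnergy μ K 1 t f := rfl
  have hmA : Measurable fun x => ∫⁻ y in E, κ x y ∂μ :=
    Measurable.lintegral_prod_right' (ν := μ.restrict E) hκmeas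
  calc μ E = ∫⁻ x in E, ∫⁻ y, κ x y ∂μ ∂μ := h1.symm
    _ = ∫⁻ x in E, ((∫⁻ y in E, κ x y ∂μ) + ∫⁻ y in Eᶜ, κ x y ∂μ) ∂μ :=
        lintegral_congr fun x => (lintegral_add_compl (κ x) hE).symm
    _ = (∫⁻ x in E, ∫⁻ y in E, κ x y ∂μ ∂μ) + ∫⁻ x in E, ∫⁻ y in Eᶜ, κ x y ∂μ ∂μ :=
        lintegral_add_left' hmA.aemeasurable _
    _ ≤ _ := add_le_add h2 h3
/-- **Isoperimetric-type inequality.** Under the ultracontractive bound, for `0 < α < β`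
there is `C_iso > 0` (depending only on `α, β, C₀`) such that for every measurable set
`E` of finite measure with `1_E ∈ B^{1,α}(X)`, `μ(E)^{(β−α)/β} ≤ C_iso ‖1_E‖_{1,α}`. -/
theorem isoperimetric_inequality (α β C₀ : ℝ)
    (hα : 0 < α) (hαβ : α < β) (hC₀ : 0 < C₀) :
    ∃ C : ℝ, 0 < C ∧
      ∀ (X : Type) [MetricSpace X] [MeasurableSpace X] [BorelSpace X]
        (μ : Measure X) [SigmaFinite μ] (K : ℝ → X → X → ℝ),
        IsHeatKernel μ K → Ultracontractive μ K C₀ β →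
        ∀ E : Set X, MeasurableSet E → μ E ≠ ∞ →
          MemBesov μ K 1 α (E.indicator fun _ => (1 : ℝ)) →
          μ E ^ ((β - α) / β) ≤
            ENNReal.ofReal C * besovSeminorm μ K 1 α (E.indicator fun _ => (1 : ℝ)) := by
  have hβ : 0 < β := hα.trans hαβ
  have hβ0 : β ≠ 0 := hβ.ne'
  refine ⟨2 * (2 * C₀) ^ (α / β), by positivity, ?_⟩
  intro X _ _ _ μ _ K hK hU E hE hEfin hmem
  set f : X → ℝ := E.indicator fun _ => (1 : ℝ) with hf
  set N := besovSeminorm μ K 1 α f with hN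
  have hNne : N ≠ ∞ := hmem.2
  by_cases h0 : μ E = 0
  · rw [h0, ENNReal.zero_rpow_of_pos (div_pos (by linarith) hβ)]
    exact zero_le
  set a := (μ E).toReal with ha'
  have ha : 0 < a := ENNReal.toReal_pos h0 hEfin
  have hμa : μ E = ENNReal.ofReal a := (ENNReal.ofReal_toReal hEfin).symm
  set t := (2 * C₀ * a) ^ (1 / β) with ht'
  have h2C0a : (0:ℝ) < 2 * C₀ * a := by positivity
  have ht : 0 < t := Real.rpow_pos_of_pos h2C0a _
  have htβ : t ^ (-β) = (2 * C₀ * a)⁻¹ := by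
    rw [ht', ← Real.rpow_mul h2C0a.le]
    have hexp : 1 / β * -β = -1 := by field_simp
    rw [hexp, Real.rpow_neg_one]
  have hkey := key_estimate μ K hK hU hE ht
  -- seminorm bound on energy
  have hsem : ENNReal.ofReal (t ^ (-α)) * besovEnergy μ K 1 t f ≤ N := by
    have h := le_iSup₂ (f := fun (s : ℝ) (_ : 0 < s) =>
      ENNReal.ofReal (s ^ (-α)) * besovEnergy μ K 1 s f ^ (1 / (1:ℝ))) t ht
    rw [hN, besovSeminorm]
    simpa using h
  have htαpos : (0:ℝ) < t ^ (-α) := Real.rpow_pos_of_pos ht _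
  have hc0 : ENNReal.ofReal (t ^ (-α)) ≠ 0 := by
    simpa [ENNReal.ofReal_eq_zero, not_le] using htαpos
  have hcinv : (ENNReal.ofReal (t ^ (-α)))⁻¹ = ENNReal.ofReal (t ^ α) := by
    rw [← ENNReal.ofReal_inv_of_pos htαpos, Real.rpow_neg ht.le, inv_inv]
  have henergy : besovEnergy μ K 1 t f ≤ ENNReal.ofReal (t ^ α) * N := by
    calc besovEnergy μ K 1 t f
        = ((ENNReal.ofReal (t ^ (-α)))⁻¹ * ENNReal.ofReal (t ^ (-α))) *
            besovEnergy μ K 1 t f := by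
          rw [ENNReal.inv_mul_cancel hc0 ENNReal.ofReal_ne_top, one_mul]
      _ = (ENNReal.ofReal (t ^ (-α)))⁻¹ *
            (ENNReal.ofReal (t ^ (-α)) * besovEnergy μ K 1 t f) := by ring
      _ ≤ (ENNReal.ofReal (t ^ (-α)))⁻¹ * N := mul_le_mul_right hsem _
      _ = ENNReal.ofReal (t ^ α) * N := by rw [hcinv]
  -- combine
  have hCt : C₀ * t ^ (-β) = (2 * a)⁻¹ := by
    rw [htβ]; field_simp
  have hhalf : (2 * a)⁻¹ * (a * a) = a / 2 := by field_simp
  have hcomb : ENNReal.ofReal a ≤ ENNReal.ofReal (a / 2) + ENNReal.ofReal (t ^ α) * N := by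
    calc ENNReal.ofReal a = μ E := hμa.symm
      _ ≤ ENNReal.ofReal (C₀ * t ^ (-β)) * (μ E * μ E) + besovEnergy μ K 1 t f := hkey
      _ ≤ ENNReal.ofReal (a / 2) + ENNReal.ofReal (t ^ α) * N := by
          refine add_le_add (le_of_eq ?_) henergy
          rw [hμa, hCt, ← ENNReal.ofReal_mul (by positivity),
            ← ENNReal.ofReal_mul (by positivity)]
          rw [hhalf]
  have hstep : ENNReal.ofReal (a / 2) ≤ ENNReal.ofReal (t ^ α) * N := by
    have h := tsub_le_iff_left.mpr hcomb
    have heq : ENNReal.ofReal a - ENNReal.ofReal (a / 2) = ENNReal.ofReal (a / 2) := by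
      rw [← ENNReal.ofReal_sub a (by positivity)]
      congr 1; ring
    rwa [heq] at h
  have hta : t ^ α = (2 * C₀) ^ (α / β) * a ^ (α / β) := by
    rw [ht', ← Real.rpow_mul h2C0a.le, one_div, inv_mul_eq_div,
      Real.mul_rpow (by positivity) ha.le]
  -- final bound
  set d := ENNReal.ofReal (a ^ (α / β)) with hd'
  have hdpos : (0:ℝ) < a ^ (α / β) := Real.rpow_pos_of_pos ha _
  have hd0 : d ≠ 0 := by simpa [hd', ENNReal.ofReal_eq_zero, not_le] using hdpos
  have hdt : d ≠ ∞ := ENNReal.ofReal_ne_top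
  have h2t : ENNReal.ofReal 2 * ENNReal.ofReal (t ^ α) =
      ENNReal.ofReal (2 * (2 * C₀) ^ (α / β)) * d := by
    rw [← ENNReal.ofReal_mul (by norm_num : (0:ℝ) ≤ 2), hta, ← mul_assoc,
      ENNReal.ofReal_mul (by positivity), hd']
  have hgoal : ENNReal.ofReal a ≤ ENNReal.ofReal (2 * (2 * C₀) ^ (α / β)) * N * d := by
    calc ENNReal.ofReal a = ENNReal.ofReal 2 * ENNReal.ofReal (a / 2) := by
          rw [← ENNReal.ofReal_mul (by norm_num)]; congr 1; ring
      _ ≤ ENNReal.ofReal 2 * (ENNReal.ofReal (t ^ α) * N) := mul_le_mul_right hstep _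
      _ = (ENNReal.ofReal 2 * ENNReal.ofReal (t ^ α)) * N := (mul_assoc _ _ _).symm
      _ = ENNReal.ofReal (2 * (2 * C₀) ^ (α / β)) * N * d := by rw [h2t, mul_right_comm]
  have hrw : a ^ ((β - α) / β) = a * (a ^ (α / β))⁻¹ := by
    have hexp : (β - α) / β = 1 + -(α / β) := by rw [sub_div, div_self hβ0]; ring
    rw [hexp, Real.rpow_add ha, Real.rpow_one, Real.rpow_neg ha.le]
  calc μ E ^ ((β - α) / β) = ENNReal.ofReal (a ^ ((β - α) / β)) := by
        rw [hμa, ENNReal.ofReal_rpow_of_pos ha]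
    _ = ENNReal.ofReal a * d⁻¹ := by
        rw [hrw, ENNReal.ofReal_mul ha.le, hd', ENNReal.ofReal_inv_of_pos hdpos]
    _ ≤ (ENNReal.ofReal (2 * (2 * C₀) ^ (α / β)) * N * d) * d⁻¹ :=
        mul_le_mul_left hgoal _
    _ = ENNReal.ofReal (2 * (2 * C₀) ^ (α / β)) * N := by
        rw [mul_assoc, ENNReal.mul_inv_cancel hd0 hdt, mul_one]
end BesovDirichlet
end
end

section
/- Assume μ(X) = 1 and assume hypercontractivity with constant ρ₀ > 0: for all 1 < p < q < ∞ and t > 0 with e^{ρ₀ t} ≥ √((q−1)/(p−1)), one has ‖P_t f‖_{L^q(X,μ)} ≤ ‖f‖_{L^p(X,μ)} for every f ∈ L^p(X,μ). Then there exists a numerical constant C̃ > 0 (independent of the space, the kernel and ρ₀) such that every measurable set A ⊆ X with 0 < μ(A) ≤ 1/2 and 1_A ∈ B^{1,1/2}(X) satisfies the Gaussian isoperimetric inequality ‖1_A‖_{1,1/2} ≥ C̃ · √ρ₀ · μ(A) · ( ln(1/μ(A)) )^{1/2}. -/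
open MeasureTheory ENNReal Metric Filter

noncomputable section

namespace BesovDirichlet

variable {X : Type*} [MeasurableSpace X]

lemma ofReal_integral_le {μ : Measure X} {f : X → ℝ} (hf : ∀ x, 0 ≤ f x) :
    ENNReal.ofReal (∫ x, f x ∂μ) ≤ ∫⁻ x, ENNReal.ofReal (f x) ∂μ := by
  by_cases h : Integrable f μ
  · rw [ofReal_integral_eq_lintegral_ofReal h (ae_of_all _ hf)]
  · rw [integral_undef h]; simp

lemma IsHeatKernel.meas_left {μ : Measure X} {K : ℝ → X → X → ℝ}
    (hK : IsHeatKernel μ K) (t : ℝ) (x : X) : Measurable fun y => K t x y :=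
  (hK.measurable t).comp measurable_prodMk_left

lemma IsHeatKernel.meas_right {μ : Measure X} {K : ℝ → X → X → ℝ}
    (hK : IsHeatKernel μ K) (t : ℝ) (y : X) : Measurable fun x => K t x y :=
  (hK.measurable t).comp measurable_prodMk_right

lemma IsHeatKernel.meas_ofReal {μ : Measure X} {K : ℝ → X → X → ℝ}
    (hK : IsHeatKernel μ K) (t : ℝ) :
    Measurable fun xy : X × X => ENNReal.ofReal (K t xy.1 xy.2) :=
  (hK.measurable t).ennreal_ofReal

lemma IsHeatKernel.cons' {μ : Measure X} {K : ℝ → X → X → ℝ}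
    (hK : IsHeatKernel μ K) {t : ℝ} (ht : 0 < t) :
    ∀ᵐ x ∂μ, Integrable (fun y => K t x y) μ ∧
      (∫⁻ y, ENNReal.ofReal (K t x y) ∂μ) = 1 := by
  filter_upwards [hK.conservative t ht] with x hx
  have hint : Integrable (fun y => K t x y) μ := by
    by_contra h
    rw [integral_undef h] at hx
    norm_num at hx
  refine ⟨hint, ?_⟩
  rw [← ofReal_integral_eq_lintegral_ofReal hint (ae_of_all _ fun y => hK.nonneg t x y), hx,
    ENNReal.ofReal_one]

lemma energy_ge {μ : Measure X} [IsProbabilityMeasure μ] {K : ℝ → X → X → ℝ}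
    (hK : IsHeatKernel μ K) {A : Set X} (hA : MeasurableSet A) {t : ℝ} (ht : 0 < t) :
    2 * (μ A - ∫⁻ x in A, ∫⁻ y in A, ENNReal.ofReal (K t x y) ∂μ ∂μ) ≤
      besovEnergy μ K 1 t (A.indicator fun _ => (1 : ℝ)) := by
  set f : X → ℝ := A.indicator fun _ => (1 : ℝ) with hf
  set ι : X → ℝ≥0∞ := fun x => ∫⁻ y in A, ENNReal.ofReal (K t x y) ∂μ with hι
  have hιm : Measurable ι :=
    Measurable.lintegral_prod_right ((hK.meas_ofReal t).comp measurable_id)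
  -- the inner integrand
  set H : X → ℝ≥0∞ := fun x => ∫⁻ y, ENNReal.ofReal (|f x - f y| ^ (1:ℝ)) *
      ENNReal.ofReal (K t x y) ∂μ with hH
  have hE : besovEnergy μ K 1 t f = ∫⁻ x in A, H x ∂μ + ∫⁻ x in Aᶜ, H x ∂μ := by
    rw [besovEnergy, lintegral_add_compl _ hA]
  -- indicator values
  have hfval : ∀ x, x ∈ A → f x = 1 := fun x hx => by simp [hf, Set.indicator_of_mem hx]
  have hfval' : ∀ x, x ∉ A → f x = 0 := fun x hx => by simp [hf, Set.indicator_of_notMem hx]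
  -- first piece
  have h1 : ∫⁻ x in A, ∫⁻ y in Aᶜ, ENNReal.ofReal (K t x y) ∂μ ∂μ ≤ ∫⁻ x in A, H x ∂μ := by
    refine lintegral_mono_ae ?_
    filter_upwards [ae_restrict_mem hA] with x hx
    calc ∫⁻ y in Aᶜ, ENNReal.ofReal (K t x y) ∂μ
        = ∫⁻ y in Aᶜ, ENNReal.ofReal (|f x - f y| ^ (1:ℝ)) * ENNReal.ofReal (K t x y) ∂μ := by
          refine (setLIntegral_congr_fun hA.compl (fun y hy => ?_)).symm
          rw [hfval x hx, hfval' y hy]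
          norm_num
      _ ≤ H x := setLIntegral_le_lintegral _ _
  have h2 : ∫⁻ x in Aᶜ, ∫⁻ y in A, ENNReal.ofReal (K t x y) ∂μ ∂μ ≤ ∫⁻ x in Aᶜ, H x ∂μ := by
    refine lintegral_mono_ae ?_
    filter_upwards [ae_restrict_mem hA.compl] with x hx
    calc ∫⁻ y in A, ENNReal.ofReal (K t x y) ∂μ
        = ∫⁻ y in A, ENNReal.ofReal (|f x - f y| ^ (1:ℝ)) * ENNReal.ofReal (K t x y) ∂μ := by
          refine (setLIntegral_congr_fun hA (fun y hy => ?_)).symm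
          rw [hfval' x hx, hfval y hy]
          norm_num
      _ ≤ H x := setLIntegral_le_lintegral _ _
  -- swap: the compl-A integral equals the A-compl integral
  have hswap : ∫⁻ x in Aᶜ, ∫⁻ y in A, ENNReal.ofReal (K t x y) ∂μ ∂μ =
      ∫⁻ x in A, ∫⁻ y in Aᶜ, ENNReal.ofReal (K t x y) ∂μ ∂μ := by
    rw [lintegral_lintegral_swap ((hK.meas_ofReal t).aemeasurable)]
    refine lintegral_congr fun y => lintegral_congr fun x => by rw [hK.symm]
  -- the A-compl integral equals μ A - D
  have hcons := hK.cons' ht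
  have hkey : ∫⁻ x in A, ∫⁻ y in Aᶜ, ENNReal.ofReal (K t x y) ∂μ ∂μ =
      μ A - ∫⁻ x in A, ι x ∂μ := by
    have hae : ∀ᵐ x ∂μ.restrict A,
        (∫⁻ y in Aᶜ, ENNReal.ofReal (K t x y) ∂μ) = 1 - ι x := by
      refine ae_restrict_of_ae ?_
      filter_upwards [hcons] with x hx
      have hadd : ι x + ∫⁻ y in Aᶜ, ENNReal.ofReal (K t x y) ∂μ = 1 := by
        rw [hι]; rw [lintegral_add_compl _ hA, hx.2]
      have hιle : ι x ≠ ∞ := by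
        refine ne_of_lt (lt_of_le_of_lt ?_ (by norm_num : (1:ℝ≥0∞) < ∞))
        rw [← hx.2, hι]; exact setLIntegral_le_lintegral _ _
      exact ENNReal.eq_sub_of_add_eq hιle (by rw [add_comm]; exact hadd)
    rw [lintegral_congr_ae hae]
    have hle : ι ≤ᵐ[μ.restrict A] fun _ => (1:ℝ≥0∞) := by
      refine ae_restrict_of_ae ?_
      filter_upwards [hcons] with x hx
      rw [← hx.2, hι]; exact setLIntegral_le_lintegral _ _
    have hfin : ∫⁻ x in A, ι x ∂μ ≠ ∞ := by
      refine ne_of_lt (lt_of_le_of_lt (lintegral_mono_ae hle) ?_)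
      simp [lintegral_const]
    rw [lintegral_sub hιm hfin hle, setLIntegral_one]
  have hD : ∫⁻ x in A, ι x ∂μ = ∫⁻ x in A, ∫⁻ y in A, ENNReal.ofReal (K t x y) ∂μ ∂μ := rfl
  calc 2 * (μ A - ∫⁻ x in A, ∫⁻ y in A, ENNReal.ofReal (K t x y) ∂μ ∂μ)
      = (μ A - ∫⁻ x in A, ι x ∂μ) + (μ A - ∫⁻ x in A, ι x ∂μ) := by rw [← hD]; ring
    _ ≤ ∫⁻ x in A, H x ∂μ + ∫⁻ x in Aᶜ, H x ∂μ := by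
        refine add_le_add (le_trans (le_of_eq hkey.symm) h1)
          (le_trans (le_of_eq ?_) h2)
        rw [hswap, hkey]
    _ = besovEnergy μ K 1 t f := hE.symm

lemma D_le {μ : Measure X} [IsProbabilityMeasure μ] {K : ℝ → X → X → ℝ}
    (hK : IsHeatKernel μ K) {A : Set X} (hA : MeasurableSet A) {t : ℝ} (ht : 0 < t) :
    ∫⁻ x in A, ∫⁻ y in A, ENNReal.ofReal (K t x y) ∂μ ∂μ ≤
      eLpNorm (heatOp μ K (t/2) (A.indicator fun _ => (1:ℝ))) 2 μ ^ 2 := by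
  set f : X → ℝ := A.indicator fun _ => (1 : ℝ) with hfdef
  set s : ℝ := t / 2 with hsdef
  have hs : 0 < s := by positivity
  have hss : s + s = t := by rw [hsdef]; ring
  set g : X → ℝ≥0∞ := fun z => ∫⁻ x in A, ENNReal.ofReal (K s z x) ∂μ with hgdef
  have hgm : Measurable g :=
    Measurable.lintegral_prod_right ((hK.meas_ofReal s).comp measurable_id)
  set h : X → ℝ := heatOp μ K s f with hhdef
  -- Step 1: D ≤ ∫⁻ z, g z * g z
  have hprod : ∀ᵐ xy ∂((μ.restrict A).prod (μ.restrict A)),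
      ENNReal.ofReal (K t xy.1 xy.2) ≤
        ∫⁻ z, ENNReal.ofReal (K s xy.1 z) * ENNReal.ofReal (K s z xy.2) ∂μ := by
    rw [Measure.prod_restrict]
    refine ae_restrict_of_ae ?_
    filter_upwards [hK.semigroup s s hs hs] with xy hxy
    rw [hss] at hxy
    rw [← hxy]
    refine le_trans (ofReal_integral_le fun z =>
      mul_nonneg (hK.nonneg s xy.1 z) (hK.nonneg s z xy.2)) ?_
    refine le_of_eq (lintegral_congr fun z => ENNReal.ofReal_mul (hK.nonneg s xy.1 z))
  have m1 : Measurable fun p : (X × X) × X => ENNReal.ofReal (K s p.1.1 p.2) :=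
    ((hK.measurable s).comp (measurable_fst.fst.prodMk measurable_snd)).ennreal_ofReal
  have m2 : Measurable fun p : (X × X) × X => ENNReal.ofReal (K s p.2 p.1.2) :=
    ((hK.measurable s).comp (measurable_snd.prodMk measurable_fst.snd)).ennreal_ofReal
  have minner : Measurable fun xy : X × X =>
      ∫⁻ z, ENNReal.ofReal (K s xy.1 z) * ENNReal.ofReal (K s z xy.2) ∂μ :=
    Measurable.lintegral_prod_right (m1.mul m2)
  have step1 : ∫⁻ x in A, ∫⁻ y in A, ENNReal.ofReal (K t x y) ∂μ ∂μ ≤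
      ∫⁻ z, g z * g z ∂μ := by
    calc ∫⁻ x in A, ∫⁻ y in A, ENNReal.ofReal (K t x y) ∂μ ∂μ
        = ∫⁻ xy, ENNReal.ofReal (K t xy.1 xy.2) ∂((μ.restrict A).prod (μ.restrict A)) :=
          (lintegral_prod _ (hK.meas_ofReal t).aemeasurable).symm
      _ ≤ ∫⁻ xy, (∫⁻ z, ENNReal.ofReal (K s xy.1 z) * ENNReal.ofReal (K s z xy.2) ∂μ)
            ∂((μ.restrict A).prod (μ.restrict A)) :=
          lintegral_mono_ae hprod
      _ = ∫⁻ x in A, ∫⁻ y in A,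
            ∫⁻ z, ENNReal.ofReal (K s x z) * ENNReal.ofReal (K s z y) ∂μ ∂μ ∂μ :=
          lintegral_prod _ minner.aemeasurable
      _ = ∫⁻ x in A, ∫⁻ z, ENNReal.ofReal (K s x z) * g z ∂μ ∂μ := by
          refine lintegral_congr fun x => ?_
          rw [lintegral_lintegral_swap]
          · refine lintegral_congr fun z => ?_
            rw [lintegral_const_mul _ ((hK.meas_left s z).ennreal_ofReal)]
          · exact (((hK.meas_left s x).comp measurable_snd).ennreal_ofReal.mul
              (((hK.measurable s).comp (measurable_snd.prodMk measurable_fst)).ennreal_ofReal)).aemeasurable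
      _ = ∫⁻ z, ∫⁻ x in A, ENNReal.ofReal (K s x z) * g z ∂μ ∂μ := by
          rw [lintegral_lintegral_swap]
          exact ((((hK.measurable s).comp (measurable_fst.prodMk measurable_snd)).ennreal_ofReal).mul
            (hgm.comp measurable_snd)).aemeasurable
      _ = ∫⁻ z, g z * g z ∂μ := by
          refine lintegral_congr fun z => ?_
          rw [lintegral_mul_const _ ((hK.meas_right s z).ennreal_ofReal)]
          congr 1
          refine lintegral_congr fun x => by rw [hK.symm]
  -- Step 2: ∫⁻ z, g z * g z = (eLpNorm h 2 μ)^2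
  have hae : ∀ᵐ z ∂μ, ‖h z‖ₑ = g z := by
    filter_upwards [hK.cons' hs] with z hz
    have h1 : h z = ∫ y in A, K s z y ∂μ := by
      rw [hhdef, heatOp, ← integral_indicator hA]
      congr 1
      funext y
      by_cases hy : y ∈ A <;>
        simp [hfdef, Set.indicator_of_mem, Set.indicator_of_notMem, hy]
    have h2 : h z = (g z).toReal := by
      rw [h1, integral_eq_lintegral_of_nonneg_ae (ae_of_all _ fun y => hK.nonneg s z y)
        ((hK.meas_left s z).aestronglyMeasurable)]
    have hgne : g z ≠ ∞ := by
      refine ne_of_lt (lt_of_le_of_lt ?_ (by norm_num : (1:ℝ≥0∞) < ∞))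
      rw [← hz.2]
      exact setLIntegral_le_lintegral _ _
    rw [h2, Real.enorm_eq_ofReal ENNReal.toReal_nonneg, ENNReal.ofReal_toReal hgne]
  have step2 : ∫⁻ z, g z * g z ∂μ = eLpNorm h 2 μ ^ 2 := by
    have e1 : eLpNorm h 2 μ = (∫⁻ z, g z * g z ∂μ) ^ (1/2 : ℝ) := by
      rw [eLpNorm_eq_lintegral_rpow_enorm_toReal (by norm_num) (by norm_num), ENNReal.toReal_ofNat]
      congr 1
      refine lintegral_congr_ae ?_
      filter_upwards [hae] with z hz
      rw [hz, show (2:ℝ) = ((2:ℕ):ℝ) by norm_num, ENNReal.rpow_natCast]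
      ring
    rw [e1, ← ENNReal.rpow_natCast _ 2, ← ENNReal.rpow_mul,
      show (1/2 * ((2:ℕ):ℝ)) = 1 by norm_num, ENNReal.rpow_one]
  rw [← step2]
  exact step1

lemma real_ineq {ρ₀ r L : ℝ} (hρ : 0 < ρ₀) (hr0 : 0 < r) (hL : 2/3 ≤ L)
    (hlog : Real.log r = -L) :
    (1/4) * Real.sqrt ρ₀ * r * Real.sqrt L ≤
      ((ρ₀ * L)⁻¹) ^ (-(1/2:ℝ)) *
        (2 * (r - r ^ (2 / (1 + Real.exp (-(ρ₀ * (ρ₀ * L)⁻¹)))))) := by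
  have hL0 : 0 < L := by linarith
  have hx : ρ₀ * (ρ₀ * L)⁻¹ = L⁻¹ := by field_simp
  rw [hx]
  set E := Real.exp (-L⁻¹) with hE
  have hE0 : 0 < E := Real.exp_pos _
  have hE1 : E < 1 := Real.exp_lt_one_iff.2 (by simp [inv_pos.2 hL0])
  set p := 1 + E with hp
  have hp0 : 0 < p := by positivity
  set δ := 2/p - 1 with hδ
  have hrp : r ^ (2/p) = r * Real.exp (-(δ*L)) := by
    calc r ^ (2/p) = Real.exp (Real.log r * (2/p)) := Real.rpow_def_of_pos hr0 _
      _ = Real.exp (-L + -(δ*L)) := by rw [hlog]; congr 1; rw [hδ]; ring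
      _ = Real.exp (-L) * Real.exp (-(δ*L)) := Real.exp_add _ _
      _ = r * Real.exp (-(δ*L)) := by rw [← hlog, Real.exp_log hr0]
  have hEe : E * Real.exp (L⁻¹) = 1 := by rw [hE, ← Real.exp_add]; simp
  have hexp : L⁻¹ + 1 ≤ Real.exp (L⁻¹) := Real.add_one_le_exp _
  have hEL : E * (L + 1) ≤ L := by
    have h3 : E * (L⁻¹ + 1) ≤ 1 := by nlinarith
    have hinv : L⁻¹ * L = 1 := inv_mul_cancel₀ hL0.ne'
    nlinarith [mul_le_mul_of_nonneg_right h3 hL0.le, hinv, hE0.le]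
  have hδL : 1/5 ≤ δ * L := by
    have hδeq : δ = (1 - E)/(1 + E) := by rw [hδ, hp]; field_simp; ring
    rw [hδeq, div_mul_eq_mul_div, le_div_iff₀ (by positivity)]
    nlinarith
  have hmain : r/6 ≤ r - r^(2/p) := by
    rw [hrp]
    have h8 : Real.exp (-(δ*L)) ≤ 5/6 := by
      have h5 : Real.exp (-(δ*L)) ≤ Real.exp (-(1/5)) := Real.exp_le_exp.2 (by linarith)
      have h6 : Real.exp (-(1/5:ℝ)) * Real.exp (1/5:ℝ) = 1 := by rw [← Real.exp_add]; simp
      have h7 : (1/5 : ℝ) + 1 ≤ Real.exp (1/5) := Real.add_one_le_exp _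
      nlinarith [Real.exp_pos (-(1/5:ℝ))]
    nlinarith
  have hpow : ((ρ₀ * L)⁻¹ : ℝ) ^ (-(1/2:ℝ)) = Real.sqrt ρ₀ * Real.sqrt L := by
    rw [Real.rpow_neg (by positivity), Real.inv_rpow (by positivity), inv_inv,
      ← Real.sqrt_eq_rpow, Real.sqrt_mul hρ.le]
  rw [hpow]
  have hS : 0 ≤ Real.sqrt ρ₀ * Real.sqrt L :=
    mul_nonneg (Real.sqrt_nonneg _) (Real.sqrt_nonneg _)
  nlinarith [mul_le_mul_of_nonneg_left (by linarith : r/3 ≤ 2*(r - r^(2/p))) hS, hr0]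

/-- **Gaussian isoperimetric inequality from hypercontractivity.** There is a numerical
constant `C̃ > 0`, independent of the space, the kernel and `ρ₀`, such that if `μ(X) = 1`
and the semigroup is hypercontractive with constant `ρ₀ > 0`, then every measurable set
`A` with `0 < μ(A) ≤ 1/2` and `1_A ∈ B^{1,1/2}(X)` satisfies
`‖1_A‖_{1,1/2} ≥ C̃ √ρ₀ μ(A) (ln(1/μ(A)))^{1/2}`. -/
theorem gaussian_isoperimetry :
    ∃ C : ℝ, 0 < C ∧
      ∀ (X : Type) [MetricSpace X] [MeasurableSpace X] [BorelSpace X]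
        (μ : Measure X) [IsProbabilityMeasure μ] (K : ℝ → X → X → ℝ),
        IsHeatKernel μ K →
        ∀ ρ₀ : ℝ, 0 < ρ₀ →
        (∀ p q t : ℝ, 1 < p → p < q → 0 < t →
          Real.sqrt ((q - 1) / (p - 1)) ≤ Real.exp (ρ₀ * t) →
          ∀ f : X → ℝ, MemLp f (ENNReal.ofReal p) μ →
            eLpNorm (heatOp μ K t f) (ENNReal.ofReal q) μ ≤
              eLpNorm f (ENNReal.ofReal p) μ) →
        ∀ A : Set X, MeasurableSet A → 0 < μ A → μ A ≤ 1 / 2 →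
          MemBesov μ K 1 (1 / 2) (A.indicator fun _ => (1 : ℝ)) →
          ENNReal.ofReal (C * Real.sqrt ρ₀ * (μ A).toReal *
              Real.sqrt (Real.log (1 / (μ A).toReal))) ≤
            besovSeminorm μ K 1 (1 / 2) (A.indicator fun _ => (1 : ℝ)) := by
  refine ⟨1/4, by norm_num, ?_⟩
  intro Y _ _ _ μ _ K hK ρ₀ hρ HC A hA hA0 hA2 _
  set f : Y → ℝ := A.indicator fun _ => (1 : ℝ) with hfdef
  have hane : μ A ≠ ∞ := measure_ne_top μ A
  set r := (μ A).toReal with hrdef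
  have hr0 : 0 < r := ENNReal.toReal_pos hA0.ne' hane
  have hr2 : r ≤ 1/2 := by
    have h := ENNReal.toReal_mono (by norm_num) hA2
    simpa using h
  have hμr : μ A = ENNReal.ofReal r := (ENNReal.ofReal_toReal hane).symm
  set L := Real.log (1/r) with hLdef
  have hlog : Real.log r = -L := by rw [hLdef, one_div, Real.log_inv, neg_neg]
  have h2r : (2:ℝ) ≤ 1/r := by rw [le_div_iff₀ hr0]; linarith
  have hL : 2/3 ≤ L := by
    have hl2 : Real.log 2 ≤ L := by
      rw [hLdef]; exact Real.log_le_log (by norm_num) h2r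
    have := Real.log_two_gt_d9
    linarith
  have hL0 : 0 < L := by linarith
  set t := (ρ₀ * L)⁻¹ with htdef
  have ht : 0 < t := by positivity
  have hx : ρ₀ * t = L⁻¹ := by rw [htdef]; field_simp
  set q : ℝ := 1 + Real.exp (-(ρ₀ * t)) with hqdef
  have hq1 : 1 < q := by
    have := Real.exp_pos (-(ρ₀ * t)); rw [hqdef]; linarith
  have hq2 : q < 2 := by
    have hlt : Real.exp (-(ρ₀ * t)) < 1 :=
      Real.exp_lt_one_iff.2 (neg_lt_zero.2 (by positivity))
    rw [hqdef]; linarith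
  have hq0 : (0:ℝ) < q := by linarith
  have hfm : Measurable f := measurable_const.indicator hA
  have hbd : ∀ x, ‖f x‖ ≤ 1 := by
    intro x
    by_cases hx' : x ∈ A <;>
      simp [hfdef, Set.indicator_of_mem, Set.indicator_of_notMem, hx']
  have hmem : MemLp f (ENNReal.ofReal q) μ :=
    MemLp.mono_exponent
      (memLp_top_of_bound hfm.aestronglyMeasurable 1 (ae_of_all _ hbd)) le_top
  have hcond : Real.sqrt ((2 - 1)/(q - 1)) ≤ Real.exp (ρ₀ * (t/2)) := by
    have hq1' : q - 1 = Real.exp (-(ρ₀ * t)) := by rw [hqdef]; ring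
    have he : (2 - 1 : ℝ)/(q - 1) = Real.exp (ρ₀ * t) := by
      rw [hq1', Real.exp_neg]; field_simp; norm_num
    rw [he, show (ρ₀ * t) = (ρ₀ * (t/2)) + (ρ₀ * (t/2)) by ring, Real.exp_add,
      Real.sqrt_mul_self (Real.exp_pos _).le]
  have hHC := HC q 2 (t/2) hq1 hq2 (by positivity) hcond f hmem
  have h2e : (ENNReal.ofReal (2:ℝ)) = (2:ℝ≥0∞) := by norm_num
  rw [h2e] at hHC
  have hfq : eLpNorm f (ENNReal.ofReal q) μ = μ A ^ (1/q) := by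
    rw [hfdef, eLpNorm_indicator_const hA
      (by rw [Ne, ENNReal.ofReal_eq_zero]; push_neg; linarith) ENNReal.ofReal_ne_top]
    simp [ENNReal.toReal_ofReal hq0.le]
  have hD : ∫⁻ x in A, ∫⁻ y in A, ENNReal.ofReal (K t x y) ∂μ ∂μ ≤ μ A ^ (2/q) := by
    refine le_trans (D_le hK hA ht) ?_
    calc eLpNorm (heatOp μ K (t/2) f) 2 μ ^ 2
        ≤ eLpNorm f (ENNReal.ofReal q) μ ^ 2 := by gcongr
      _ = (μ A ^ (1/q)) ^ 2 := by rw [hfq]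
      _ = μ A ^ (2/q) := by
          rw [← ENNReal.rpow_natCast _ 2, ← ENNReal.rpow_mul]
          congr 1
          push_cast
          ring
  have hrq : μ A ^ (2/q) = ENNReal.ofReal (r ^ (2/q)) := by
    rw [hμr, ENNReal.ofReal_rpow_of_pos hr0]
  have hE : ENNReal.ofReal (2 * (r - r ^ (2/q))) ≤ besovEnergy μ K 1 t f := by
    have e1 : ENNReal.ofReal (2 * (r - r ^ (2/q))) =
        2 * (ENNReal.ofReal r - ENNReal.ofReal (r ^ (2/q))) := by
      rw [ENNReal.ofReal_mul (by norm_num), ENNReal.ofReal_sub _ (by positivity)]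
      norm_num
    rw [e1, ← hμr, ← hrq]
    refine le_trans ?_ (energy_ge hK hA ht)
    exact mul_le_mul_right (tsub_le_tsub_left hD _) 2
  rw [besovSeminorm]
  refine le_iSup₂_of_le t ht ?_
  rw [show (1/(1:ℝ)) = 1 by norm_num, ENNReal.rpow_one]
  have hri := real_ineq hρ hr0 hL hlog
  rw [← htdef, ← hqdef] at hri
  calc ENNReal.ofReal (1/4 * Real.sqrt ρ₀ * r * Real.sqrt L)
      ≤ ENNReal.ofReal (t ^ (-(1/2:ℝ)) * (2 * (r - r ^ (2/q)))) :=
        ENNReal.ofReal_le_ofReal hri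
    _ = ENNReal.ofReal (t ^ (-(1/2:ℝ))) * ENNReal.ofReal (2 * (r - r ^ (2/q))) :=
        ENNReal.ofReal_mul (by positivity)
    _ ≤ ENNReal.ofReal (t ^ (-(1/2:ℝ))) * besovEnergy μ K 1 t f :=
        mul_le_mul_right hE _


end BesovDirichlet
end
end
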